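/- arXiv:1103.5033 — 5 statements merged into one kernel-verified Lean document; each statement's English description precedes it below -/
import Mathlib

section
/- Under the log-exponential-power-law class conditions (h(y) = L(y)·y^ρ, ρ > 1, L twice differentiable, slowly varying, y·L'(y)/L(y) → 0, (y·L'(y)/L(y))' → 0, h strictly increasing to ∞ with h' > 0), let y†(n) solve h(y†(n)) = ln n, let ψ(y) = h(y) − ln h'(y), let y*(q) solve ψ'(y*) = q, and let M_T(n,q) = ∫_0^{y†(n)} h'(y)·exp(q·y − h(y)) dy. Then along any sequence (n, q(n)) with q(n) → ∞ and y*(q(n)) ≥ y†(n) (the supercritical regime q ≥ q_c(n)), ln M_T(n, q(n)) ∼ q(n)·y†(n) − h(y†(n)) + ln h'(y†(n)) as n → ∞, i.e. the ratio of the two sides tends to 1; in particular ln M_T is asymptotically linear in q in this regime. -/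
open Filter Real MeasureTheory intervalIntegral

set_option maxHeartbeats 1000000

/-- In the supercritical regime `y*(q(n)) ≥ y†(n)`, the log of the
truncated moment is asymptotically `q y†(n) - h(y†(n)) + ln h'(y†(n))`, i.e.
linear in `q`. -/
theorem stmt7 (ρ : ℝ) (hρ : 1 < ρ) (L : ℝ → ℝ)
    (hLpos : ∀ y > (0:ℝ), 0 < L y)
    (hLdiff : ∀ y > (0:ℝ), DifferentiableAt ℝ L y)
    (hLdiff2 : ∀ y > (0:ℝ), DifferentiableAt ℝ (deriv L) y)
    (hSV : ∀ t > (0:ℝ), Tendsto (fun y => L (t * y) / L y) atTop (nhds 1))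
    (hL1 : Tendsto (fun y => y * deriv L y / L y) atTop (nhds 0))
    (hL2 : Tendsto (deriv fun y => y * deriv L y / L y) atTop (nhds 0))
    (h : ℝ → ℝ) (hh : ∀ y > (0:ℝ), h y = L y * y ^ ρ)
    (hmono : StrictMonoOn h (Set.Ioi 0)) (htop : Tendsto h atTop atTop)
    (hh' : ∀ y > (0:ℝ), 0 < deriv h y)
    (ydag : ℕ → ℝ) (hydag_pos : ∀ n ≥ 2, 0 < ydag n)
    (hydag : ∀ n ≥ 2, h (ydag n) = Real.log n)
    (ψ : ℝ → ℝ) (hψ : ∀ y > (0:ℝ), ψ y = h y - Real.log (deriv h y))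
    (ystar : ℝ → ℝ) (hystar_pos : ∀ᶠ q in atTop, 0 < ystar q)
    (hystar : ∀ᶠ q in atTop, deriv ψ (ystar q) = q)
    (hystar_uniq : ∀ᶠ q in atTop, ∀ y > (0:ℝ), deriv ψ y = q → y = ystar q)
    (MT : ℕ → ℝ → ℝ)
    (hMT : ∀ n q, MT n q = ∫ y in (0:ℝ)..(ydag n),
      deriv h y * Real.exp (q * y - h y))
    (q : ℕ → ℝ) (hqtop : Tendsto q atTop atTop)
    (hsuper : ∀ᶠ n in atTop, ydag n ≤ ystar (q n)) :
    Tendsto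
      (fun n => Real.log (MT n (q n)) /
        (q n * ydag n - h (ydag n) + Real.log (deriv h (ydag n))))
      atTop (nhds 1) := by
  have hρ0 : (0:ℝ) < ρ := lt_trans one_pos hρ
  have hLne : ∀ y > (0:ℝ), L y ≠ 0 := fun y hy => (hLpos y hy).ne'
  have hhpos : ∀ y > (0:ℝ), 0 < h y := by
    intro y hy
    rw [hh y hy]
    exact mul_pos (hLpos y hy) (Real.rpow_pos_of_pos hy ρ)
  -- derivative of h
  have hhd : ∀ y > (0:ℝ), HasDerivAt h (deriv L y * y ^ ρ + L y * (ρ * y ^ (ρ - 1))) y := by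
    intro y hy
    have h2 : HasDerivAt (fun z : ℝ => z ^ ρ) (ρ * y ^ (ρ - 1)) y :=
      Real.hasDerivAt_rpow_const (Or.inl hy.ne')
    have h3 := ((hLdiff y hy).hasDerivAt).mul h2
    refine h3.congr_of_eventuallyEq ?_
    filter_upwards [isOpen_Ioi.mem_nhds hy] with z hz
    exact hh z hz
  have hderivh : ∀ y > (0:ℝ), deriv h y = deriv L y * y ^ ρ + L y * (ρ * y ^ (ρ - 1)) :=
    fun y hy => (hhd y hy).deriv
  -- second derivative of h
  set A : ℝ → ℝ := fun y => deriv (deriv L) y * y ^ ρ + deriv L y * (ρ * y ^ (ρ - 1)) +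
      (deriv L y * (ρ * y ^ (ρ - 1)) + L y * (ρ * ((ρ - 1) * y ^ (ρ - 1 - 1)))) with hA
  have hhd2 : ∀ y > (0:ℝ), HasDerivAt (deriv h) (A y) y := by
    intro y hy
    have h2 : HasDerivAt (fun z : ℝ => z ^ ρ) (ρ * y ^ (ρ - 1)) y :=
      Real.hasDerivAt_rpow_const (Or.inl hy.ne')
    have h2' : HasDerivAt (fun z : ℝ => ρ * z ^ (ρ - 1)) (ρ * ((ρ - 1) * y ^ (ρ - 1 - 1))) y :=
      (Real.hasDerivAt_rpow_const (p := ρ - 1) (Or.inl hy.ne')).const_mul ρ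
    have h3 := (((hLdiff2 y hy).hasDerivAt).mul h2).add (((hLdiff y hy).hasDerivAt).mul h2')
    refine h3.congr_of_eventuallyEq ?_
    filter_upwards [isOpen_Ioi.mem_nhds hy] with z hz
    exact hderivh z hz
  -- derivative of ψ
  set φ : ℝ → ℝ := fun y => deriv h y - A y / deriv h y with hφ
  have hψd : ∀ y > (0:ℝ), HasDerivAt ψ (φ y) y := by
    intro y hy
    have hlog : HasDerivAt (fun z => Real.log (deriv h z)) ((deriv h y)⁻¹ * A y) y :=
      (Real.hasDerivAt_log (hh' y hy).ne').comp y (hhd2 y hy)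
    have hH : HasDerivAt h (deriv h y) y := by
      rw [hderivh y hy]; exact hhd y hy
    have h3 := hH.sub hlog
    have h4 : HasDerivAt ψ (deriv h y - (deriv h y)⁻¹ * A y) y := by
      refine h3.congr_of_eventuallyEq ?_
      filter_upwards [isOpen_Ioi.mem_nhds hy] with z hz
      exact hψ z hz
    simpa [hφ, div_eq_inv_mul] using h4
  have hψderiv : ∀ y > (0:ℝ), deriv ψ y = φ y := fun y hy => (hψd y hy).deriv
  -- the slowly varying index function
  set s : ℝ → ℝ := fun y => y * deriv L y / L y with hs
  have hs0 : Tendsto s atTop (nhds 0) := hL1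
  have hs'0 : Tendsto (deriv s) atTop (nhds 0) := hL2
  have hsd : ∀ y > (0:ℝ), HasDerivAt s
      (((1 * deriv L y + y * deriv (deriv L) y) * L y - y * deriv L y * deriv L y) / L y ^ 2) y := by
    intro y hy
    have hu : HasDerivAt (fun z => z * deriv L z) (1 * deriv L y + y * deriv (deriv L) y) y :=
      (hasDerivAt_id y).mul ((hLdiff2 y hy).hasDerivAt)
    exact hu.div ((hLdiff y hy).hasDerivAt) (hLne y hy)
  have hsderiv : ∀ y > (0:ℝ), deriv s y =
      ((1 * deriv L y + y * deriv (deriv L) y) * L y - y * deriv L y * deriv L y) / L y ^ 2 :=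
    fun y hy => (hsd y hy).deriv
  -- key algebraic identity for A / h'
  have hkey : ∀ᶠ y in atTop, A y / deriv h y =
      (deriv s y + ((s y) ^ 2 + (2 * ρ - 1) * s y + (ρ ^ 2 - ρ)) / y) / (ρ + s y) := by
    filter_upwards [eventually_gt_atTop 0] with y hy
    have hy' : y ≠ 0 := hy.ne'
    have hL0 : L y ≠ 0 := hLne y hy
    have hP : (0:ℝ) < y ^ ρ := Real.rpow_pos_of_pos hy ρ
    have e1 : y ^ (ρ - 1) = y ^ ρ / y := by
      rw [Real.rpow_sub hy, Real.rpow_one]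
    have e2 : y ^ (ρ - 1 - 1) = y ^ ρ / y / y := by
      rw [Real.rpow_sub hy, Real.rpow_sub hy, Real.rpow_one]
    have hfac : deriv h y = L y * (y ^ ρ / y) * (ρ + s y) := by
      rw [hderivh y hy, e1]
      simp only [hs]
      field_simp
      ring
    have hρs : ρ + s y ≠ 0 := by
      intro h0
      have h1 := (hh' y hy).ne'
      rw [hfac, h0, mul_zero] at h1
      exact h1 rfl
    have hMne : L y * y ^ ρ / y ≠ 0 := by
      apply div_ne_zero (mul_ne_zero hL0 hP.ne') hy'
    have hfac2 : A y = (L y * y ^ ρ / y) *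
        (deriv s y + ((s y) ^ 2 + (2 * ρ - 1) * s y + (ρ ^ 2 - ρ)) / y) := by
      rw [hA, hsderiv y hy]
      simp only [hs]
      rw [e1, e2]
      field_simp
      ring
    have hfac3 : deriv h y = (L y * y ^ ρ / y) * (ρ + s y) := by
      rw [hfac]; ring
    rw [hfac2, hfac3, mul_div_mul_left _ _ hMne]
  -- limit of A / h'
  have hrne : ρ ≠ 0 := ne_of_gt hρ0
  have hE : Tendsto
      (fun y => (deriv s y + ((s y) ^ 2 + (2 * ρ - 1) * s y + (ρ ^ 2 - ρ)) / y) / (ρ + s y))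
      atTop (nhds 0) := by
    have hnum2 : Tendsto (fun y => ((s y) ^ 2 + (2 * ρ - 1) * s y + (ρ ^ 2 - ρ)) / y)
        atTop (nhds 0) := by
      apply Tendsto.div_atTop (a := 0 ^ 2 + (2 * ρ - 1) * 0 + (ρ ^ 2 - ρ)) ?_ tendsto_id
      exact ((hs0.pow 2).add (hs0.const_mul (2 * ρ - 1))).add tendsto_const_nhds
    have hden : Tendsto (fun y => ρ + s y) atTop (nhds (ρ + 0)) := tendsto_const_nhds.add hs0
    have hne : ρ + 0 ≠ 0 := by simpa using hrne
    have := (hs'0.add hnum2).div hden hne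
    simpa [Pi.div_def] using this
  have hAh : Tendsto (fun y => A y / deriv h y) atTop (nhds 0) := by
    have hkey' : (fun y => (deriv s y + ((s y) ^ 2 + (2 * ρ - 1) * s y + (ρ ^ 2 - ρ)) / y) / (ρ + s y))
        =ᶠ[atTop] (fun y => A y / deriv h y) := hkey.mono fun y hy => hy.symm
    exact Tendsto.congr' hkey' hE
  -- lower bound for L y * y^(ρ-1)
  set α : ℝ := (ρ - 1) / 2 with hαdef
  have hα : 0 < α := by
    rw [hαdef]; linarith
  have hsmall : ∀ᶠ y in atTop, |s y| < α := by
    have := Metric.tendsto_nhds.mp hs0 α hα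
    simpa [Real.dist_eq] using this
  obtain ⟨Y₁, hY₁⟩ := eventually_atTop.1 hsmall
  set Z : ℝ := max Y₁ 1 with hZdef
  have hZ1 : (1:ℝ) ≤ Z := le_max_right _ _
  have hZ0 : (0:ℝ) < Z := lt_of_lt_of_le one_pos hZ1
  have hZs : ∀ y, Z ≤ y → |s y| < α := fun y hy => hY₁ y (le_trans (le_max_left _ _) hy)
  set u : ℝ → ℝ := fun y => Real.log (L y) + α * Real.log y with hu
  have hud : ∀ y > (0:ℝ), HasDerivAt u ((L y)⁻¹ * deriv L y + α * y⁻¹) y := by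
    intro y hy
    exact ((Real.hasDerivAt_log (hLne y hy)).comp y (hLdiff y hy).hasDerivAt).add
      ((Real.hasDerivAt_log hy.ne').const_mul α)
  have humono : MonotoneOn u (Set.Ici Z) := by
    apply monotoneOn_of_deriv_nonneg (convex_Ici Z)
    · intro y hy
      exact ((hud y (lt_of_lt_of_le hZ0 hy)).differentiableAt).continuousAt.continuousWithinAt
    · intro y hy
      rw [interior_Ici] at hy
      exact ((hud y (lt_trans hZ0 hy)).differentiableAt).differentiableWithinAt
    · intro y hy
      rw [interior_Ici] at hy
      have hy0 : (0:ℝ) < y := lt_trans hZ0 hy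
      rw [(hud y hy0).deriv]
      have hsy : -α < s y := (abs_lt.1 (hZs y hy.le)).1
      have heq : (L y)⁻¹ * deriv L y + α * y⁻¹ = (s y + α) / y := by
        simp only [hs]
        field_simp [hLne y hy0]
      rw [heq]
      apply div_nonneg (by linarith) hy0.le
  have hLB : ∀ y, Z ≤ y → Real.exp (u Z) * y ^ α ≤ L y * y ^ (ρ - 1) := by
    intro y hy
    have hy0 : (0:ℝ) < y := lt_of_lt_of_le hZ0 hy
    have h1 : u Z ≤ u y := humono Set.self_mem_Ici hy hy
    have h2 : Real.exp (u Z) ≤ Real.exp (u y) := Real.exp_le_exp.2 h1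
    have h3 : Real.exp (u y) = L y * y ^ α := by
      rw [hu]
      rw [Real.exp_add, Real.exp_log (hLpos y hy0)]
      congr 1
      rw [mul_comm, ← Real.rpow_def_of_pos hy0]
    rw [h3] at h2
    have h4 : y ^ (ρ - 1) = y ^ α * y ^ α := by
      rw [← Real.rpow_add hy0]
      congr 1
      rw [hαdef]; ring
    rw [h4, ← mul_assoc]
    exact mul_le_mul_of_nonneg_right h2 (Real.rpow_nonneg hy0.le α)
  have hh'LB : ∀ y, Z ≤ y → Real.exp (u Z) * y ^ α ≤ deriv h y := by
    intro y hy
    have hy0 : (0:ℝ) < y := lt_of_lt_of_le hZ0 hy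
    have hsy := abs_lt.1 (hZs y hy)
    have hα' : α ≤ ρ - 1 := by
      rw [hαdef]; linarith
    have hρs : 1 ≤ ρ + s y := by linarith [hsy.1]
    have hfac : deriv h y = L y * y ^ (ρ - 1) * (ρ + s y) := by
      rw [hderivh y hy0]
      have e1 : y ^ ρ = y ^ (ρ - 1) * y := by
        rw [← Real.rpow_add_one hy0.ne' (ρ - 1)]
        norm_num
      rw [e1]
      have hsy' : s y = y * deriv L y / L y := rfl
      rw [hsy']
      field_simp [hLne y hy0, hy0.ne']
      ring
    rw [hfac]
    have hLpos' : 0 < L y * y ^ (ρ - 1) :=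
      mul_pos (hLpos y hy0) (Real.rpow_pos_of_pos hy0 _)
    calc Real.exp (u Z) * y ^ α ≤ L y * y ^ (ρ - 1) := hLB y hy
      _ = L y * y ^ (ρ - 1) * 1 := (mul_one _).symm
      _ ≤ L y * y ^ (ρ - 1) * (ρ + s y) := by
          exact mul_le_mul_of_nonneg_left hρs hLpos'.le
  -- growth of deriv ψ
  have hgrow : ∀ᶠ y in atTop, Real.log y ≤ deriv ψ y := by
    have hlogbd : ∀ᶠ y in atTop, Real.log y + 1 ≤ Real.exp (u Z) * y ^ α := by
      have h1 := (isLittleO_log_rpow_atTop hα).bound (c := Real.exp (u Z) / 2)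
        (by positivity)
      have h2 : Tendsto (fun y : ℝ => Real.exp (u Z) / 2 * y ^ α) atTop atTop :=
        (tendsto_rpow_atTop hα).const_mul_atTop (by positivity)
      filter_upwards [h1, h2.eventually_ge_atTop 1, eventually_ge_atTop (1:ℝ)]
        with y hy1 hy2 hy3
      have hy0 : (0:ℝ) < y := lt_of_lt_of_le one_pos hy3
      rw [Real.norm_eq_abs, Real.norm_eq_abs, abs_of_nonneg (Real.rpow_nonneg hy0.le α)] at hy1
      have : Real.log y ≤ Real.exp (u Z) / 2 * y ^ α := le_trans (le_abs_self _) hy1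
      have hhalf : Real.exp (u Z) / 2 * y ^ α + Real.exp (u Z) / 2 * y ^ α
          = Real.exp (u Z) * y ^ α := by ring
      linarith
    have hAh1 : ∀ᶠ y in atTop, |A y / deriv h y| < 1 := by
      have h0 := Metric.tendsto_nhds.mp hAh 1 one_pos
      filter_upwards [h0] with y hy
      rw [Real.dist_eq, sub_zero] at hy
      exact hy
    filter_upwards [hlogbd, hAh1, eventually_ge_atTop Z] with y h1 h2 h3
    have hy0 : (0:ℝ) < y := lt_of_lt_of_le hZ0 h3
    rw [hψderiv y hy0]
    simp only [hφ]
    have h4 := hh'LB y h3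
    have h5 := (abs_lt.1 h2).2
    linarith
  obtain ⟨Y₀, hY₀⟩ := eventually_atTop.1 hgrow
  set Y : ℝ := max Y₀ 1 with hYdef
  have hY1 : (1:ℝ) ≤ Y := le_max_right _ _
  have hYg : ∀ y, Y ≤ y → Real.log y ≤ deriv ψ y :=
    fun y hy => hY₀ y (le_trans (le_max_left _ _) hy)
  -- ydag tends to infinity
  have hbtop : Tendsto ydag atTop atTop := by
    rw [tendsto_atTop]
    intro K
    have hlogn : Tendsto (fun n : ℕ => Real.log n) atTop atTop :=
      Real.tendsto_log_atTop.comp tendsto_natCast_atTop_atTop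
    filter_upwards [hlogn.eventually_gt_atTop (h (max K 1)), eventually_ge_atTop 2]
      with n h1 h2
    by_contra hcon
    push_neg at hcon
    have hpos := hydag_pos n h2
    have hK1 : (0:ℝ) < max K 1 := lt_of_lt_of_le one_pos (le_max_right _ _)
    have hlt : h (ydag n) < h (max K 1) :=
      hmono (Set.mem_Ioi.2 hpos) (Set.mem_Ioi.2 hK1)
        (lt_of_lt_of_le hcon (le_max_left _ _))
    rw [hydag n h2] at hlt
    exact absurd h1 (not_lt.2 hlt.le)
  -- continuity facts
  have hcont_dh : ∀ y > (0:ℝ), ContinuousAt (deriv h) y :=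
    fun y hy => ((hhd2 y hy).differentiableAt).continuousAt
  have hcont_h : ∀ y > (0:ℝ), ContinuousAt h y :=
    fun y hy => ((hhd y hy).differentiableAt).continuousAt
  -- the main epsilon argument
  rw [Metric.tendsto_nhds]
  intro ε hε
  set y0 : ℝ := max Y (8 / ε) with hy0def
  have hy0Y : Y ≤ y0 := le_max_left _ _
  have hy01 : (1:ℝ) ≤ y0 := le_trans hY1 hy0Y
  have hy0pos : (0:ℝ) < y0 := lt_of_lt_of_le one_pos hy01
  have hy0ε : 8 / ε ≤ y0 := le_max_right _ _
  have hquniq : ∀ᶠ n in atTop, ∀ y > (0:ℝ), deriv ψ y = q n → y = ystar (q n) :=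
    hqtop.eventually hystar_uniq
  have hqstar : ∀ᶠ n in atTop, deriv ψ (ystar (q n)) = q n := hqtop.eventually hystar
  have hq1 : ∀ᶠ n in atTop, max 1 (deriv ψ y0 + 1) ≤ q n := hqtop.eventually_ge_atTop _
  have hq2 : ∀ᶠ n in atTop, 2 * ψ y0 / y0 ≤ q n := hqtop.eventually_ge_atTop _
  have hb1 : ∀ᶠ n in atTop, y0 + 2 ≤ ydag n := hbtop.eventually_ge_atTop _
  filter_upwards [hquniq, hqstar, hq1, hq2, hb1, eventually_ge_atTop 2, hsuper]
    with n Huniq Hstar Hq1 Hq2 Hb1 Hn2 Hsuper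
  set Q : ℝ := q n with hQdef
  set b : ℝ := ydag n with hbdef
  have hQ1 : (1:ℝ) ≤ Q := le_trans (le_max_left _ _) Hq1
  have hQy0 : deriv ψ y0 + 1 ≤ Q := le_trans (le_max_right _ _) Hq1
  have hQpos : (0:ℝ) < Q := lt_of_lt_of_le one_pos hQ1
  have hbpos : (0:ℝ) < b := hydag_pos n Hn2
  have hby0 : y0 + 2 ≤ b := Hb1
  have hb2 : (3:ℝ) ≤ b := by linarith
  -- Step 1: deriv ψ ≤ Q on (0, b)
  have hder : ∀ (a c : ℝ), 0 < a →
      ∀ z ∈ Set.Icc a c, HasDerivWithinAt ψ (deriv ψ z) (Set.Icc a c) z := by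
    intro a c ha z hz
    have hz0 : 0 < z := lt_of_lt_of_le ha hz.1
    rw [hψderiv z hz0]
    exact (hψd z hz0).hasDerivWithinAt
  have hstep1 : ∀ x ∈ Set.Ioo (0:ℝ) b, deriv ψ x ≤ Q := by
    intro x hx
    by_contra hcon
    push_neg at hcon
    have hylt : deriv ψ y0 < Q := by linarith
    rcases lt_trichotomy x y0 with hxy | hxy | hxy
    · obtain ⟨z, hz, hzQ⟩ :=
        exists_hasDerivWithinAt_eq_of_lt_of_gt hxy.le (hder x y0 hx.1) hcon hylt
      have hz0 : (0:ℝ) < z := lt_trans hx.1 hz.1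
      have hzb : z < b := by
        have := hz.2
        linarith
      have := Huniq z hz0 hzQ
      rw [← this] at Hsuper
      linarith
    · rw [hxy] at hcon; linarith
    · obtain ⟨z, hz, hzQ⟩ :=
        exists_hasDerivWithinAt_eq_of_gt_of_lt hxy.le (hder y0 x hy0pos) hylt hcon
      have hz0 : (0:ℝ) < z := lt_trans hy0pos hz.1
      have hzb : z < b := lt_trans hz.2 hx.2
      have := Huniq z hz0 hzQ
      rw [← this] at Hsuper
      linarith
  -- Step 2: log b ≤ Q
  have hstarY : Y ≤ ystar Q := by
    have : Y ≤ b := by linarith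
    linarith [Hsuper]
  have hlogb : Real.log b ≤ Q := by
    have h1 : Real.log b ≤ Real.log (ystar Q) :=
      Real.log_le_log hbpos Hsuper
    have h2 := hYg (ystar Q) hstarY
    rw [Hstar] at h2
    linarith
  -- continuity of ψ on positive intervals
  have hψcont : ∀ (a c : ℝ), 0 < a → ContinuousOn ψ (Set.Icc a c) := by
    intro a c ha z hz
    exact ((hψd z (lt_of_lt_of_le ha hz.1)).differentiableAt).continuousAt.continuousWithinAt
  -- Step 3: lower bound on D
  have hψy0b : ψ b - ψ y0 ≤ Q * (b - y0) := by
    have hy0b : y0 < b := by linarith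
    obtain ⟨ξ, hξ, hslope⟩ := exists_hasDerivAt_eq_slope ψ (deriv ψ) hy0b
      (hψcont y0 b hy0pos)
      (fun z hz => by
        have hz0 : (0:ℝ) < z := lt_trans hy0pos hz.1
        rw [hψderiv z hz0]
        exact hψd z hz0)
    have hle := hstep1 ξ ⟨lt_trans hy0pos hξ.1, hξ.2⟩
    rw [hslope] at hle
    have hba : (0:ℝ) < b - y0 := by linarith
    have := (div_le_iff₀ hba).1 hle
    linarith
  have hψy0Q : ψ y0 ≤ Q * y0 / 2 := by
    have := (div_le_iff₀ hy0pos).1 Hq2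
    linarith
  have hD : Q * y0 / 2 ≤ Q * b - ψ b := by nlinarith
  have hDpos : 0 < Q * b - ψ b := lt_of_lt_of_le (by positivity) hD
  -- Step 4: g is monotone on (0, b]
  set g : ℝ → ℝ := fun y => Q * y - ψ y with hgdef
  have hgd : ∀ y > (0:ℝ), HasDerivAt g (Q - deriv ψ y) y := by
    intro y hy
    have h1 := ((hasDerivAt_id y).const_mul Q).sub (hψd y hy)
    rw [hψderiv y hy]
    simpa [hgdef, Pi.sub_def] using h1
  have hgmono : MonotoneOn g (Set.Ioc 0 b) := by
    apply monotoneOn_of_deriv_nonneg (convex_Ioc 0 b)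
    · intro y hy
      exact ((hgd y hy.1).differentiableAt).continuousAt.continuousWithinAt
    · rw [interior_Ioc]
      intro y hy
      exact ((hgd y hy.1).differentiableAt).differentiableWithinAt
    · rw [interior_Ioc]
      intro y hy
      rw [(hgd y hy.1).deriv]
      have := hstep1 y hy
      linarith
  -- Step 5: the integrand
  set f : ℝ → ℝ := fun y => deriv h y * Real.exp (Q * y - h y) with hfdef
  have hfg : ∀ y ∈ Set.Ioc (0:ℝ) b, f y = Real.exp (g y) := by
    intro y hy
    simp only [hfdef, hgdef]
    rw [hψ y hy.1]
    have heq : Q * y - (h y - Real.log (deriv h y))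
        = Real.log (deriv h y) + (Q * y - h y) := by ring
    rw [heq, Real.exp_add, Real.exp_log (hh' y hy.1)]
  have hfpos : ∀ y ∈ Set.Ioc (0:ℝ) b, 0 < f y := by
    intro y hy
    rw [hfg y hy]
    exact Real.exp_pos _
  have hfcont : ∀ y > (0:ℝ), ContinuousAt f y := by
    intro y hy
    simp only [hfdef]
    exact (hcont_dh y hy).mul
      (Real.continuous_exp.continuousAt.comp
        ((continuousAt_const.mul continuousAt_id).sub (hcont_h y hy)))
  -- Step 6: integrability
  have hfint' : ∀ (a : ℝ), 0 < a → IntegrableOn f (Set.Ioc a b) := by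
    intro a ha
    have : ContinuousOn f (Set.Icc a b) :=
      fun z hz => (hfcont z (lt_of_lt_of_le ha hz.1)).continuousWithinAt
    exact (this.integrableOn_Icc).mono_set Set.Ioc_subset_Icc_self
  have hbound : ∀ (a : ℝ), 0 < a → a ≤ b →
      (∫ x in Set.Ioc a b, ‖f x‖) ≤ Real.exp (Q * b) * h b := by
    intro a ha hab
    have hIcc0 : ∀ z ∈ Set.Icc a b, (0:ℝ) < z := fun z hz => lt_of_lt_of_le ha hz.1
    have hdhcont : ContinuousOn (deriv h) (Set.Icc a b) :=
      fun z hz => (hcont_dh z (hIcc0 z hz)).continuousWithinAt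
    have hdhint : IntegrableOn (deriv h) (Set.Ioc a b) :=
      (hdhcont.integrableOn_Icc).mono_set Set.Ioc_subset_Icc_self
    have hnorm : ∀ x ∈ Set.Ioc a b, ‖f x‖ ≤ Real.exp (Q * b) * deriv h x := by
      intro x hx
      have hx0 : (0:ℝ) < x := lt_of_lt_of_le ha hx.1.le
      rw [Real.norm_eq_abs, abs_of_pos (hfpos x ⟨hx0, hx.2⟩)]
      simp only [hfdef]
      rw [mul_comm (Real.exp (Q * b)) (deriv h x)]
      apply mul_le_mul_of_nonneg_left _ (hh' x hx0).le
      apply Real.exp_le_exp.2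
      have h1 : Q * x ≤ Q * b := mul_le_mul_of_nonneg_left hx.2 hQpos.le
      have h2 : 0 < h x := hhpos x hx0
      linarith
    calc (∫ x in Set.Ioc a b, ‖f x‖)
        ≤ ∫ x in Set.Ioc a b, Real.exp (Q * b) * deriv h x :=
          setIntegral_mono_on ((hfint' a ha).norm) (hdhint.const_mul _)
            measurableSet_Ioc hnorm
      _ = Real.exp (Q * b) * ∫ x in Set.Ioc a b, deriv h x := by
          rw [MeasureTheory.integral_const_mul]
      _ ≤ Real.exp (Q * b) * h b := by
          apply mul_le_mul_of_nonneg_left _ (Real.exp_pos _).le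
          have hFTC : ∫ x in a..b, deriv h x = h b - h a := by
            apply intervalIntegral.integral_deriv_eq_sub
            · intro x hx
              rw [Set.uIcc_of_le hab] at hx
              exact (hhd x (hIcc0 x hx)).differentiableAt
            · rw [intervalIntegrable_iff_integrableOn_Ioc_of_le hab]
              exact hdhint
          rw [← intervalIntegral.integral_of_le hab, hFTC]
          have := hhpos a ha
          linarith
  have hintf : IntegrableOn f (Set.Ioc 0 b) := by
    have htnd : Tendsto (fun i : ℕ => b / ((i : ℝ) + 2)) atTop (nhds 0) := by
      apply Tendsto.div_atTop tendsto_const_nhds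
      exact tendsto_atTop_add_const_right atTop 2 tendsto_natCast_atTop_atTop
    have hpos : ∀ i : ℕ, (0:ℝ) < b / ((i : ℝ) + 2) := by
      intro i
      apply div_pos hbpos
      positivity
    have hle : ∀ i : ℕ, b / ((i : ℝ) + 2) ≤ b := by
      intro i
      apply div_le_self hbpos.le
      have : (0:ℝ) ≤ (i : ℝ) := Nat.cast_nonneg i
      linarith
    exact MeasureTheory.integrableOn_Ioc_of_intervalIntegral_norm_bounded_left
      (fun i => hfint' _ (hpos i)) htnd
      (Filter.Eventually.of_forall fun i => hbound _ (hpos i) (hle i))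
  have hMTval : MT n Q = ∫ x in Set.Ioc (0:ℝ) b, f x := by
    rw [hMT n Q, ← hbdef, intervalIntegral.integral_of_le hbpos.le]
  -- Step 7: upper bound
  have hub : MT n Q ≤ b * Real.exp (g b) := by
    rw [hMTval]
    have hbmem : b ∈ Set.Ioc (0:ℝ) b := ⟨hbpos, le_refl b⟩
    calc (∫ x in Set.Ioc (0:ℝ) b, f x)
        ≤ ∫ _x in Set.Ioc (0:ℝ) b, Real.exp (g b) := by
          apply setIntegral_mono_on hintf
            (integrableOn_const measure_Ioc_lt_top.ne) measurableSet_Ioc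
          intro x hx
          rw [hfg x hx]
          exact Real.exp_le_exp.2 (hgmono hx hbmem hx.2)
      _ = b * Real.exp (g b) := by
          rw [setIntegral_const, Real.volume_real_Ioc, smul_eq_mul]
          rw [max_eq_left (by linarith)]
          ring
  -- Step 7': lower bound
  set a' : ℝ := b - 1 / Q with ha'def
  have h1Q : 1 / Q ≤ 1 := by
    rw [div_le_one hQpos]; exact hQ1
  have h1Qpos : 0 < 1 / Q := by positivity
  have ha'pos : 0 < a' := by rw [ha'def]; linarith
  have ha'Y : Y ≤ a' := by
    rw [ha'def]
    have : Y ≤ y0 := hy0Y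
    linarith
  have ha'b : a' < b := by rw [ha'def]; linarith
  have ha'mem : a' ∈ Set.Ioc (0:ℝ) b := ⟨ha'pos, ha'b.le⟩
  have hψmono : ψ a' ≤ ψ b := by
    obtain ⟨ξ, hξ, hsl⟩ := exists_hasDerivAt_eq_slope ψ (deriv ψ) ha'b
      (hψcont a' b ha'pos)
      (fun z hz => by
        have hz0 : (0:ℝ) < z := lt_trans ha'pos hz.1
        rw [hψderiv z hz0]
        exact hψd z hz0)
    have hξY : Y ≤ ξ := le_trans ha'Y hξ.1.le
    have h1 := hYg ξ hξY
    have hξ1 : (1:ℝ) ≤ ξ := le_trans (le_trans hY1 ha'Y) hξ.1.le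
    have hlogξ : 0 ≤ Real.log ξ := Real.log_nonneg hξ1
    have hslnn : 0 ≤ (ψ b - ψ a') / (b - a') := by rw [← hsl]; linarith
    have hba' : 0 < b - a' := by linarith
    have := mul_nonneg hslnn hba'.le
    rw [div_mul_cancel₀ _ hba'.ne'] at this
    linarith
  have hQa' : Q * a' = Q * b - 1 := by
    have hQQ : Q * (1 / Q) = 1 := by field_simp
    rw [ha'def, mul_sub, hQQ]
  have hga' : g b - 1 ≤ g a' := by
    simp only [hgdef]
    rw [hQa']
    linarith
  have hlb : (1 / Q) * Real.exp (g b - 1) ≤ MT n Q := by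
    rw [hMTval]
    have hsub : Set.Ioc a' b ⊆ Set.Ioc (0:ℝ) b := Set.Ioc_subset_Ioc_left ha'pos.le
    have hconstint : IntegrableOn (fun _ : ℝ => Real.exp (g b - 1)) (Set.Ioc a' b) :=
      integrableOn_const measure_Ioc_lt_top.ne
    calc (1 / Q) * Real.exp (g b - 1)
        = ∫ _x in Set.Ioc a' b, Real.exp (g b - 1) := by
          rw [setIntegral_const, Real.volume_real_Ioc, smul_eq_mul]
          rw [max_eq_left (by linarith)]
          rw [ha'def]
          ring
      _ ≤ ∫ x in Set.Ioc a' b, f x := by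
          apply setIntegral_mono_on hconstint (hintf.mono_set hsub) measurableSet_Ioc
          intro x hx
          rw [hfg x (hsub hx)]
          apply Real.exp_le_exp.2
          calc g b - 1 ≤ g a' := hga'
            _ ≤ g x := hgmono ha'mem (hsub hx) hx.1.le
      _ ≤ ∫ x in Set.Ioc (0:ℝ) b, f x := by
          apply setIntegral_mono_set hintf
          · filter_upwards [MeasureTheory.ae_restrict_mem measurableSet_Ioc] with x hx
            exact (hfpos x hx).le
          · exact Filter.Eventually.of_forall fun x hx => hsub hx
  have hMTpos : 0 < MT n Q := lt_of_lt_of_le (by positivity) hlb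
  -- log bounds
  have hlogup : Real.log (MT n Q) ≤ Real.log b + g b := by
    calc Real.log (MT n Q) ≤ Real.log (b * Real.exp (g b)) := Real.log_le_log hMTpos hub
      _ = Real.log b + g b := by
          rw [Real.log_mul hbpos.ne' (Real.exp_pos _).ne', Real.log_exp]
  have hloglb : g b - 1 - Real.log Q ≤ Real.log (MT n Q) := by
    have heq : Real.log ((1 / Q) * Real.exp (g b - 1)) = g b - 1 - Real.log Q := by
      rw [one_div, Real.log_mul (inv_ne_zero hQpos.ne') (Real.exp_pos _).ne',
        Real.log_inv, Real.log_exp]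
      ring
    calc g b - 1 - Real.log Q = Real.log ((1 / Q) * Real.exp (g b - 1)) := heq.symm
      _ ≤ Real.log (MT n Q) := Real.log_le_log (by positivity) hlb
  -- final computation
  have hDen : Q * b - h b + Real.log (deriv h b) = Q * b - ψ b := by
    rw [hψ b hbpos]
    ring
  have hgbD : g b = Q * b - ψ b := by simp only [hgdef]
  have hlogQ : Real.log Q ≤ Q := by
    have := Real.log_le_sub_one_of_pos hQpos
    linarith
  have hup2 : Real.log (MT n Q) - (Q * b - ψ b) ≤ 1 + Q := by
    rw [← hgbD]
    linarith
  have hlo2 : -(1 + Q) ≤ Real.log (MT n Q) - (Q * b - ψ b) := by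
    rw [← hgbD]
    linarith
  rw [Real.dist_eq]
  rw [hDen]
  have hfrac : Real.log (MT n Q) / (Q * b - ψ b) - 1
      = (Real.log (MT n Q) - (Q * b - ψ b)) / (Q * b - ψ b) := by
    field_simp
  rw [hfrac, abs_div, abs_of_pos hDpos]
  have habs : |Real.log (MT n Q) - (Q * b - ψ b)| ≤ 2 * Q := by
    rw [abs_le]
    constructor
    · linarith
    · linarith
  have hεpos8 : 0 < 8 / ε := by positivity
  calc |Real.log (MT n Q) - (Q * b - ψ b)| / (Q * b - ψ b)
      ≤ 2 * Q / (Q * y0 / 2) :=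
        div_le_div₀ (by positivity) habs (by positivity) hD
    _ = 4 / y0 := by
        field_simp
        ring
    _ ≤ 4 / (8 / ε) := by
        apply div_le_div_of_nonneg_left (by norm_num) hεpos8 hy0ε
    _ = ε / 2 := by
        field_simp
        ring
    _ < ε := by linarith
end

section
/- Under the log-exponential-power-law class conditions (h(y) = L(y)·y^ρ, ρ > 1, L twice differentiable, slowly varying, y·L'(y)/L(y) → 0, (y·L'(y)/L(y))' → 0, h strictly increasing to ∞ with h' > 0), let y†(n) solve h(y†(n)) = ln n, and define the critical moment q_c(n) = h'(y†(n)) − h''(y†(n))/h'(y†(n)) (i.e. the solution of y*(q_c) = y†(n)). Then the exact identity q_c(n)/ln n = ρ_l(y†(n))/y†(n) − h''(y†(n))/( h(y†(n))·h'(y†(n)) ) holds, where ρ_l(y) = y·h'(y)/h(y); moreover, with θ(n) = ln n / y†(n), the second term is asymptotically negligible, so that q_c(n) / ( ρ_l(y†(n))·θ(n) ) → 1 as n → ∞. -/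
open Filter Real

/-- The critical moment `q_c(n) = h'(y†) - h''(y†)/h'(y†)`
satisfies the exact identity
`q_c(n)/ln n = ρ_l(y†(n))/y†(n) - h''(y†(n))/(h(y†(n)) h'(y†(n)))` and,
with `θ(n) = ln n / y†(n)`, the approximation `q_c(n) ≃ ρ_l(y†(n)) θ(n)` holds
in the sense that the ratio tends to `1`. -/
theorem stmt9 (ρ : ℝ) (hρ : 1 < ρ) (L : ℝ → ℝ)
    (hLpos : ∀ y > (0:ℝ), 0 < L y)
    (hLdiff : ∀ y > (0:ℝ), DifferentiableAt ℝ L y)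
    (hLdiff2 : ∀ y > (0:ℝ), DifferentiableAt ℝ (deriv L) y)
    (hSV : ∀ t > (0:ℝ), Tendsto (fun y => L (t * y) / L y) atTop (nhds 1))
    (hL1 : Tendsto (fun y => y * deriv L y / L y) atTop (nhds 0))
    (hL2 : Tendsto (deriv fun y => y * deriv L y / L y) atTop (nhds 0))
    (h : ℝ → ℝ) (hh : ∀ y > (0:ℝ), h y = L y * y ^ ρ)
    (hmono : StrictMonoOn h (Set.Ioi 0)) (htop : Tendsto h atTop atTop)
    (hh' : ∀ y > (0:ℝ), 0 < deriv h y)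
    (ydag : ℕ → ℝ) (hydag_pos : ∀ n ≥ 2, 0 < ydag n)
    (hydag : ∀ n ≥ 2, h (ydag n) = Real.log n)
    (θ : ℕ → ℝ) (hθ : ∀ n ≥ 2, θ n = Real.log n / ydag n)
    (ρl : ℝ → ℝ) (hρl : ∀ y > (0:ℝ), ρl y = y * deriv h y / h y)
    (qc : ℕ → ℝ)
    (hqc : ∀ n ≥ 2, qc n =
      deriv h (ydag n) - deriv (deriv h) (ydag n) / deriv h (ydag n)) :
    (∀ n ≥ 2, qc n / Real.log n =
        ρl (ydag n) / ydag n -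
          deriv (deriv h) (ydag n) / (h (ydag n) * deriv h (ydag n))) ∧
      Tendsto (fun n => qc n / (ρl (ydag n) * θ n)) atTop (nhds 1) := by
  set ε : ℝ → ℝ := fun y => y * deriv L y / L y with hεdef
  -- positivity of h
  have hpos : ∀ y > (0:ℝ), 0 < h y := by
    intro y hy
    rw [hh y hy]
    exact mul_pos (hLpos y hy) (Real.rpow_pos_of_pos hy ρ)
  -- first derivative
  have hderivh : ∀ y > (0:ℝ), HasDerivAt h
      (deriv L y * y ^ ρ + L y * (ρ * y ^ (ρ - 1))) y := by
    intro y hy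
    have hev : (fun z => L z * z ^ ρ) =ᶠ[nhds y] h :=
      Filter.eventuallyEq_of_mem (Ioi_mem_nhds hy) (fun z hz => (hh z hz).symm)
    exact (((hLdiff y hy).hasDerivAt.mul
      (Real.hasDerivAt_rpow_const (Or.inl (ne_of_gt hy))))).congr_of_eventuallyEq hev.symm
  have hA : ∀ y > (0:ℝ), deriv h y = h y * (ε y + ρ) / y := by
    intro y hy
    have hL := (hLpos y hy).ne'
    rw [(hderivh y hy).deriv, hh y hy, hεdef]
    rw [Real.rpow_sub hy, Real.rpow_one]
    field_simp
  -- positivity of ε + ρ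
  have hsum_pos : ∀ y > (0:ℝ), 0 < ε y + ρ := by
    intro y hy
    have h2 := hh' y hy
    rw [hA y hy] at h2
    have h3 := mul_pos h2 hy
    rw [div_mul_cancel₀ _ (ne_of_gt hy)] at h3
    nlinarith [hpos y hy]
  -- derivative of ε
  have hderivε : ∀ y > (0:ℝ), HasDerivAt ε
      (((1 * deriv L y + y * deriv (deriv L) y) * L y -
        y * deriv L y * deriv L y) / (L y) ^ 2) y := by
    intro y hy
    exact ((hasDerivAt_id y).mul (hLdiff2 y hy).hasDerivAt).div
      (hLdiff y hy).hasDerivAt (hLpos y hy).ne'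
  -- second derivative
  have hderivh2 : ∀ y > (0:ℝ), HasDerivAt (deriv h)
      ((deriv (deriv L) y * y ^ ρ + deriv L y * (ρ * y ^ (ρ - 1))) +
        (deriv L y * (ρ * y ^ (ρ - 1)) + L y * (ρ * ((ρ - 1) * y ^ (ρ - 1 - 1))))) y := by
    intro y hy
    have hev : (fun z => deriv L z * z ^ ρ + L z * (ρ * z ^ (ρ - 1))) =ᶠ[nhds y] deriv h :=
      Filter.eventuallyEq_of_mem (Ioi_mem_nhds hy) (fun z hz => ((hderivh z hz).deriv).symm)
    have hd : HasDerivAt (fun z => deriv L z * z ^ ρ + L z * (ρ * z ^ (ρ - 1)))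
        ((deriv (deriv L) y * y ^ ρ + deriv L y * (ρ * y ^ (ρ - 1))) +
        (deriv L y * (ρ * y ^ (ρ - 1)) + L y * (ρ * ((ρ - 1) * y ^ (ρ - 1 - 1))))) y := by
      exact ((hLdiff2 y hy).hasDerivAt.mul
          (Real.hasDerivAt_rpow_const (Or.inl (ne_of_gt hy)))).add
        ((hLdiff y hy).hasDerivAt.mul
          ((Real.hasDerivAt_rpow_const (Or.inl (ne_of_gt hy))).const_mul ρ))
    exact hd.congr_of_eventuallyEq hev.symm
  have hB : ∀ y > (0:ℝ), deriv (deriv h) y =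
      h y / y ^ 2 * ((ε y + ρ) ^ 2 - (ε y + ρ) + y * deriv ε y) := by
    intro y hy
    have hL := (hLpos y hy).ne'
    have hy' := (ne_of_gt hy)
    rw [(hderivh2 y hy).deriv, (hderivε y hy).deriv, hh y hy, hεdef]
    have e1 : y ^ (ρ - 1) = y ^ ρ / y := by rw [Real.rpow_sub hy, Real.rpow_one]
    have e2 : y ^ (ρ - 1 - 1) = y ^ ρ / y / y := by
      rw [Real.rpow_sub hy, Real.rpow_sub hy, Real.rpow_one]
    rw [e1, e2]
    field_simp
    ring
  -- ydag tends to infinity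
  have hlogn : Tendsto (fun n : ℕ => Real.log n) atTop atTop :=
    Real.tendsto_log_atTop.comp tendsto_natCast_atTop_atTop
  have hydagtop : Tendsto ydag atTop atTop := by
    rw [tendsto_atTop]
    intro b
    filter_upwards [hlogn.eventually_gt_atTop (h (max b 1)), eventually_ge_atTop 2] with n h1 h2
    have hM : (0:ℝ) < max b 1 := lt_of_lt_of_le one_pos (le_max_right b 1)
    have : max b 1 < ydag n := by
      by_contra hc
      push_neg at hc
      have := hmono.monotoneOn (Set.mem_Ioi.mpr (hydag_pos n h2)) (Set.mem_Ioi.mpr hM) hc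
      rw [hydag n h2] at this
      exact absurd this (not_le_of_gt h1)
    exact le_of_lt (lt_of_le_of_lt (le_max_left b 1) this)
  -- y / h y → 0
  have hyh : Tendsto (fun y => y / h y) atTop (nhds 0) := by
    set δ := (ρ - 1) / 2 with hδdef
    have hδ : 0 < δ := by rw [hδdef]; linarith
    obtain ⟨a₀, ha₀⟩ := eventually_atTop.mp (hL1.eventually (eventually_gt_nhds (by linarith : -δ < (0:ℝ))))
    set a := max a₀ 1 with hadef
    have ha1 : (1:ℝ) ≤ a := le_max_right a₀ 1
    have hapos : (0:ℝ) < a := lt_of_lt_of_le one_pos ha1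
    have ha : ∀ y ≥ a, -δ < ε y := fun y hy => ha₀ y (le_trans (le_max_left a₀ 1) hy)
    set φ : ℝ → ℝ := fun x => Real.log (h (Real.exp x)) - (1 + δ) * x with hφdef
    have hφd : ∀ x : ℝ, a ≤ Real.exp x → HasDerivAt φ (ε (Real.exp x) + δ) x := by
      intro x hx
      have hy : (0:ℝ) < Real.exp x := Real.exp_pos x
      have hhy := hpos _ hy
      have h1 : HasDerivAt (fun x => h (Real.exp x)) (deriv h (Real.exp x) * Real.exp x) x :=
        HasDerivAt.comp x ((hderivh _ hy).differentiableAt.hasDerivAt) (Real.hasDerivAt_exp x)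
      have h2 : HasDerivAt (fun x => Real.log (h (Real.exp x)))
          ((h (Real.exp x))⁻¹ * (deriv h (Real.exp x) * Real.exp x)) x :=
        HasDerivAt.comp x (Real.hasDerivAt_log hhy.ne') h1
      have h4 : HasDerivAt (fun x : ℝ => (1 + δ) * x) (1 + δ) x := by
        simpa using (hasDerivAt_id x).const_mul (1 + δ)
      have h3 : HasDerivAt φ
          ((h (Real.exp x))⁻¹ * (deriv h (Real.exp x) * Real.exp x) - (1 + δ)) x :=
        h2.sub h4
      have heq : (h (Real.exp x))⁻¹ * (deriv h (Real.exp x) * Real.exp x) - (1 + δ)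
          = ε (Real.exp x) + δ := by
        rw [hA _ hy, hδdef]
        field_simp
        ring
      rwa [heq] at h3
    set A := Real.log a with hAdef
    have hexpA : Real.exp A = a := Real.exp_log hapos
    have hφmono : MonotoneOn φ (Set.Ici A) := by
      apply monotoneOn_of_deriv_nonneg (convex_Ici A)
      · intro x hx
        have hax : a ≤ Real.exp x := by
          rw [← hexpA]; exact Real.exp_le_exp.mpr hx
        exact ((hφd x hax).differentiableAt.continuousAt).continuousWithinAt
      · intro x hx
        rw [interior_Ici] at hx
        have hax : a ≤ Real.exp x := by
          rw [← hexpA]; exact Real.exp_le_exp.mpr (le_of_lt hx)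
        exact ((hφd x hax).differentiableAt).differentiableWithinAt
      · intro x hx
        rw [interior_Ici] at hx
        have hax : a ≤ Real.exp x := by
          rw [← hexpA]; exact Real.exp_le_exp.mpr (le_of_lt hx)
        rw [(hφd x hax).deriv]
        linarith [ha _ hax]
    have hlb : Tendsto (fun y => Real.log (h y) - Real.log y) atTop atTop := by
      apply tendsto_atTop_mono' atTop
        (show ∀ᶠ y in atTop, δ * Real.log y + φ A ≤ Real.log (h y) - Real.log y from ?_)
      · exact tendsto_atTop_add_const_right atTop (φ A)
          (Real.tendsto_log_atTop.const_mul_atTop hδ)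
      · filter_upwards [eventually_ge_atTop (Real.exp A), eventually_gt_atTop (0:ℝ)] with y hy hy0
        have hxA : A ≤ Real.log y := by
          rw [← Real.log_exp A]; exact Real.log_le_log (Real.exp_pos A) hy
        have hmle := hφmono (Set.mem_Ici.mpr (le_refl A)) (Set.mem_Ici.mpr hxA) hxA
        have hunfold : φ (Real.log y) = Real.log (h y) - (1 + δ) * Real.log y := by
          simp only [hφdef]
          rw [Real.exp_log hy0]
        rw [hunfold] at hmle
        linarith
    have hbot : Tendsto (fun y => Real.log y - Real.log (h y)) atTop atBot := by
      have := tendsto_neg_atTop_atBot.comp hlb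
      simpa [Function.comp_def, neg_sub] using this
    have : Tendsto (fun y => Real.exp (Real.log y - Real.log (h y))) atTop (nhds 0) :=
      Real.tendsto_exp_atBot.comp hbot
    apply this.congr'
    filter_upwards [eventually_gt_atTop (0:ℝ)] with y hy
    rw [Real.exp_sub, Real.exp_log hy, Real.exp_log (hpos y hy)]
  -- limit of h''/(h')^2
  have hG : Tendsto (fun y => deriv (deriv h) y / (deriv h y) ^ 2) atTop (nhds 0) := by
    have hsum : Tendsto (fun y => ε y + ρ) atTop (nhds (0 + ρ)) := hL1.add tendsto_const_nhds
    have hρne : ((0:ℝ) + ρ) ^ 2 ≠ 0 := by rw [zero_add]; exact pow_ne_zero 2 (by linarith)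
    have hF : Tendsto (fun y => ((ε y + ρ) ^ 2 - (ε y + ρ)) / (ε y + ρ) ^ 2 * (h y)⁻¹ +
        (y / h y) * (deriv ε y / (ε y + ρ) ^ 2)) atTop
        (nhds ((((0:ℝ) + ρ) ^ 2 - (0 + ρ)) / (0 + ρ) ^ 2 * 0 + 0 * (0 / (0 + ρ) ^ 2))) := by
      exact ((((hsum.pow 2).sub hsum).div (hsum.pow 2) hρne).mul htop.inv_tendsto_atTop).add
        (hyh.mul (hL2.div (hsum.pow 2) hρne))
    have hval : (((0:ℝ) + ρ) ^ 2 - (0 + ρ)) / (0 + ρ) ^ 2 * 0 + 0 * (0 / (0 + ρ) ^ 2) = 0 := by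
      ring
    rw [hval] at hF
    apply hF.congr'
    filter_upwards [eventually_gt_atTop (0:ℝ)] with y hy
    have hhy := (hpos y hy).ne'
    have hsy := (hsum_pos y hy).ne'
    rw [hA y hy, hB y hy]
    field_simp
  have hGy : Tendsto (fun n => deriv (deriv h) (ydag n) / (deriv h (ydag n)) ^ 2) atTop
      (nhds 0) := hG.comp hydagtop
  constructor
  · intro n hn
    have hy := hydag_pos n hn
    have hlog := hydag n hn
    have hlogpos : (0:ℝ) < Real.log n := by
      rw [← hlog]; exact hpos _ hy
    rw [hqc n hn, hρl _ hy, ← hlog]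
    have h1 := (hh' _ hy).ne'
    have h2 := (hpos _ hy).ne'
    field_simp
  · have h1 : Tendsto (fun n => 1 - deriv (deriv h) (ydag n) / (deriv h (ydag n)) ^ 2) atTop
        (nhds (1 - 0)) := tendsto_const_nhds.sub hGy
    rw [sub_zero] at h1
    apply h1.congr'
    filter_upwards [eventually_ge_atTop 2] with n hn
    have hy := hydag_pos n hn
    have h1' := (hh' _ hy).ne'
    have h2 := (hpos _ hy).ne'
    rw [hqc n hn, hρl _ hy, hθ n hn, ← hydag n hn]
    field_simp
end

section
/- Under the log-exponential-power-law class conditions (h(y) = L(y)·y^ρ, ρ > 1, L twice differentiable, slowly varying, y·L'(y)/L(y) → 0, (y·L'(y)/L(y))' → 0, h strictly increasing to ∞ with h' > 0), let y†(n) solve h(y†(n)) = ln n and let q_c(n) = h'(y†(n)) − h''(y†(n))/h'(y†(n)). Then the critical moment grows like (ln n)^{1 − 1/ρ} up to slowly varying corrections; in particular, ln q_c(n) / ln ln n → 1 − 1/ρ as n → ∞. -/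
open Filter Real Topology Set

-- if G' → 0 then G u / u → 0
lemma aux_div (G G' : ℝ → ℝ) (hG : ∀ u, HasDerivAt G (G' u) u)
    (hcont : Continuous G') (h0 : Tendsto G' atTop (nhds 0)) :
    Tendsto (fun u => G u / u) atTop (nhds 0) := by
  rw [NormedAddCommGroup.tendsto_nhds_zero]
  intro ε hε
  obtain ⟨u0, hu0⟩ := (((NormedAddCommGroup.tendsto_nhds_zero.mp h0) (ε/2)
    (by positivity)).and (eventually_ge_atTop 1)).exists_forall_of_atTop
  have key : ∀ u ≥ u0, |G u| ≤ |G u0| + ε/2 * u := by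
    intro u hu
    have h1 : ∀ x ∈ Set.uIcc u0 u, HasDerivAt G (G' x) x := fun x _ => hG x
    have h2 : IntervalIntegrable G' MeasureTheory.volume u0 u :=
      hcont.intervalIntegrable _ _
    have h3 := intervalIntegral.integral_eq_sub_of_hasDerivAt h1 h2
    have h4 : ‖∫ x in u0..u, G' x‖ ≤ ε/2 * |u - u0| := by
      apply intervalIntegral.norm_integral_le_of_norm_le_const
      intro x hx
      have hxge : u0 ≤ x := by
        rcases Set.mem_uIoc.mp hx with h | h
        · linarith [h.1]
        · linarith [h.1, hu]
      exact le_of_lt (hu0 x hxge).1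
    rw [h3] at h4
    have hu0pos : (0:ℝ) ≤ u0 := le_trans zero_le_one (hu0 u0 le_rfl).2
    have : |G u - G u0| ≤ ε/2 * u := by
      calc |G u - G u0| ≤ ε/2 * |u - u0| := h4
        _ ≤ ε/2 * u := by
            rw [abs_of_nonneg (by linarith)]
            nlinarith
    calc |G u| = |G u0 + (G u - G u0)| := by ring_nf
      _ ≤ |G u0| + |G u - G u0| := abs_add_le _ _
      _ ≤ |G u0| + ε/2 * u := by linarith
  filter_upwards [eventually_ge_atTop u0, eventually_gt_atTop (max 1 (2 * |G u0| / ε))]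
    with u hu hu'
  have hu1 : (1:ℝ) < u := lt_of_le_of_lt (le_max_left _ _) hu'
  have hupos : (0:ℝ) < u := by linarith
  have h5 := key u hu
  have h6 : 2 * |G u0| / ε < u := lt_of_le_of_lt (le_max_right _ _) hu'
  have h7 : |G u0| < ε/2 * u := by
    rw [div_lt_iff₀ hε] at h6; nlinarith
  rw [Real.norm_eq_abs, abs_div, abs_of_pos hupos, div_lt_iff₀ hupos]
  calc |G u| ≤ |G u0| + ε/2 * u := h5
    _ < ε/2 * u + ε/2 * u := by linarith
    _ = ε * u := by ring

lemma logL_div (L : ℝ → ℝ)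
    (hLpos : ∀ y > (0:ℝ), 0 < L y)
    (hLdiff : ∀ y > (0:ℝ), DifferentiableAt ℝ L y)
    (hLdiff2 : ∀ y > (0:ℝ), DifferentiableAt ℝ (deriv L) y)
    (hL1 : Tendsto (fun y => y * deriv L y / L y) atTop (nhds 0)) :
    Tendsto (fun y => Real.log (L y) / Real.log y) atTop (nhds 0) := by
  set G : ℝ → ℝ := fun u => Real.log (L (Real.exp u)) with hGdef
  set G' : ℝ → ℝ := fun u => Real.exp u * deriv L (Real.exp u) / L (Real.exp u) with hG'def
  have hG : ∀ u, HasDerivAt G (G' u) u := by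
    intro u
    have he : HasDerivAt Real.exp (Real.exp u) u := Real.hasDerivAt_exp u
    have hLe : HasDerivAt L (deriv L (Real.exp u)) (Real.exp u) :=
      (hLdiff _ (Real.exp_pos u)).hasDerivAt
    have hlog : HasDerivAt Real.log (L (Real.exp u))⁻¹ (L (Real.exp u)) :=
      Real.hasDerivAt_log (ne_of_gt (hLpos _ (Real.exp_pos u)))
    have := (hlog.comp u (hLe.comp u he))
    convert this using 1
    · rfl
    · rfl
    · rfl
    · simp only [hG'def, div_eq_mul_inv]
      ring
  have hcont : Continuous G' := by
    rw [continuous_iff_continuousAt]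
    intro u
    have hep : (0:ℝ) < Real.exp u := Real.exp_pos u
    have h1 : ContinuousAt (deriv L) (Real.exp u) := (hLdiff2 _ hep).continuousAt
    have h2 : ContinuousAt L (Real.exp u) := (hLdiff _ hep).continuousAt
    exact (Real.continuous_exp.continuousAt.mul
      (h1.comp Real.continuous_exp.continuousAt)).div
      (h2.comp Real.continuous_exp.continuousAt) (ne_of_gt (hLpos _ hep))
  have h0 : Tendsto G' atTop (nhds 0) := hL1.comp Real.tendsto_exp_atTop
  have := aux_div G G' hG hcont h0
  have hcomp := this.comp Real.tendsto_log_atTop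
  apply hcomp.congr'
  filter_upwards [eventually_gt_atTop (0:ℝ)] with y hy
  simp only [Function.comp, hGdef, Real.exp_log hy]

lemma deriv_h_eq (ρ : ℝ) (L h : ℝ → ℝ)
    (hLdiff : ∀ y > (0:ℝ), DifferentiableAt ℝ L y)
    (hh : ∀ y > (0:ℝ), h y = L y * y ^ ρ) (y : ℝ) (hy : 0 < y) :
    deriv h y = deriv L y * y ^ ρ + L y * (ρ * y ^ (ρ - 1)) := by
  have hev : h =ᶠ[nhds y] fun x => L x * x ^ ρ := by
    filter_upwards [Ioi_mem_nhds hy] with x hx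
    exact hh x hx
  rw [hev.deriv_eq]
  have h1 : HasDerivAt (fun x : ℝ => x ^ ρ) (ρ * y ^ (ρ - 1)) y :=
    Real.hasDerivAt_rpow_const (Or.inl (ne_of_gt hy))
  have h2 : HasDerivAt L (deriv L y) y := (hLdiff y hy).hasDerivAt
  exact (h2.mul h1).deriv

lemma deriv2_h_eq (ρ : ℝ) (L h : ℝ → ℝ)
    (hLdiff : ∀ y > (0:ℝ), DifferentiableAt ℝ L y)
    (hLdiff2 : ∀ y > (0:ℝ), DifferentiableAt ℝ (deriv L) y)
    (hh : ∀ y > (0:ℝ), h y = L y * y ^ ρ) (y : ℝ) (hy : 0 < y) :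
    deriv (deriv h) y = deriv (deriv L) y * y ^ ρ
      + 2 * deriv L y * (ρ * y ^ (ρ - 1)) + L y * (ρ * ((ρ-1) * y ^ (ρ - 1 - 1))) := by
  have hev : deriv h =ᶠ[nhds y]
      fun x => deriv L x * x ^ ρ + L x * (ρ * x ^ (ρ - 1)) := by
    filter_upwards [Ioi_mem_nhds hy] with x hx
    exact deriv_h_eq ρ L h hLdiff hh x hx
  rw [hev.deriv_eq]
  have h1 : HasDerivAt (fun x : ℝ => x ^ ρ) (ρ * y ^ (ρ - 1)) y :=
    Real.hasDerivAt_rpow_const (Or.inl (ne_of_gt hy))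
  have h1' : HasDerivAt (fun x : ℝ => x ^ (ρ-1)) ((ρ-1) * y ^ (ρ - 1 - 1)) y :=
    Real.hasDerivAt_rpow_const (Or.inl (ne_of_gt hy))
  have h2 : HasDerivAt L (deriv L y) y := (hLdiff y hy).hasDerivAt
  have h3 : HasDerivAt (deriv L) (deriv (deriv L) y) y := (hLdiff2 y hy).hasDerivAt
  have h4 : HasDerivAt (fun x : ℝ => ρ * x ^ (ρ-1)) (ρ * ((ρ-1) * y ^ (ρ - 1 - 1))) y :=
    h1'.const_mul ρ
  have : deriv (fun x => deriv L x * x ^ ρ + L x * (ρ * x ^ (ρ - 1))) y = _ :=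
    ((h3.mul h1).add (h2.mul h4)).deriv
  rw [this]; ring

-- deriv of E := fun x => x * deriv L x / L x
lemma deriv_E_eq (L : ℝ → ℝ)
    (hLpos : ∀ y > (0:ℝ), 0 < L y)
    (hLdiff : ∀ y > (0:ℝ), DifferentiableAt ℝ L y)
    (hLdiff2 : ∀ y > (0:ℝ), DifferentiableAt ℝ (deriv L) y)
    (y : ℝ) (hy : 0 < y) :
    deriv (fun x => x * deriv L x / L x) y =
      ((deriv L y + y * deriv (deriv L) y) * L y - y * deriv L y * deriv L y)
        / (L y)^2 := by
  have h1 : HasDerivAt (fun x : ℝ => x * deriv L x)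
      (1 * deriv L y + y * deriv (deriv L) y) y :=
    (hasDerivAt_id y).mul (hLdiff2 y hy).hasDerivAt
  have h2 : HasDerivAt L (deriv L y) y := (hLdiff y hy).hasDerivAt
  have : deriv (fun x => x * deriv L x / L x) y = _ :=
    (h1.div h2 (ne_of_gt (hLpos y hy))).deriv
  rw [this]; ring_nf

lemma deriv2_h_eq' (ρ : ℝ) (L h : ℝ → ℝ)
    (hLpos : ∀ y > (0:ℝ), 0 < L y)
    (hLdiff : ∀ y > (0:ℝ), DifferentiableAt ℝ L y)
    (hLdiff2 : ∀ y > (0:ℝ), DifferentiableAt ℝ (deriv L) y)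
    (hh : ∀ y > (0:ℝ), h y = L y * y ^ ρ) (y : ℝ) (hy : 0 < y) :
    deriv (deriv h) y = L y * y ^ (ρ - 1 - 1) *
      (y * deriv (fun x => x * deriv L x / L x) y
        + (ρ + y * deriv L y / L y)^2 - (ρ + y * deriv L y / L y)) := by
  rw [deriv2_h_eq ρ L h hLdiff hLdiff2 hh y hy,
    deriv_E_eq L hLpos hLdiff hLdiff2 y hy]
  have hyne : y ≠ 0 := ne_of_gt hy
  have hLne : L y ≠ 0 := ne_of_gt (hLpos y hy)
  have e1 : y ^ (ρ - 1) = y ^ (ρ - 1 - 1) * y := by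
    rw [← Real.rpow_add_one hyne]; ring_nf
  have e2 : y ^ ρ = y ^ (ρ - 1 - 1) * y * y := by
    rw [← Real.rpow_add_one hyne, ← Real.rpow_add_one hyne]; ring_nf
  rw [e1, e2]
  field_simp
  ring

lemma deriv_h_eq2 (ρ : ℝ) (L h : ℝ → ℝ)
    (hLpos : ∀ y > (0:ℝ), 0 < L y)
    (hLdiff : ∀ y > (0:ℝ), DifferentiableAt ℝ L y)
    (hh : ∀ y > (0:ℝ), h y = L y * y ^ ρ) (y : ℝ) (hy : 0 < y) :
    deriv h y = (ρ + y * deriv L y / L y) * (L y * y ^ (ρ - 1)) := by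
  rw [deriv_h_eq ρ L h hLdiff hh y hy]
  have hyne : y ≠ 0 := ne_of_gt hy
  have hLne : L y ≠ 0 := ne_of_gt (hLpos y hy)
  have e2 : y ^ ρ = y ^ (ρ - 1) * y := by
    rw [← Real.rpow_add_one hyne]; ring_nf
  rw [e2]; field_simp; ring

lemma deriv2_div (ρ : ℝ) (L h : ℝ → ℝ)
    (hLpos : ∀ y > (0:ℝ), 0 < L y)
    (hLdiff : ∀ y > (0:ℝ), DifferentiableAt ℝ L y)
    (hLdiff2 : ∀ y > (0:ℝ), DifferentiableAt ℝ (deriv L) y)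
    (hh : ∀ y > (0:ℝ), h y = L y * y ^ ρ) (y : ℝ) (hy : 0 < y)
    (hne : ρ + y * deriv L y / L y ≠ 0) :
    deriv (deriv h) y = ((ρ + y * deriv L y / L y) * (L y * y ^ (ρ - 1))) *
      (deriv (fun x => x * deriv L x / L x) y / (ρ + y * deriv L y / L y)
        + (ρ + y * deriv L y / L y - 1) / y) := by
  rw [deriv2_h_eq' ρ L h hLpos hLdiff hLdiff2 hh y hy]
  have hyne : y ≠ 0 := ne_of_gt hy
  have e1 : y ^ (ρ - 1) = y ^ (ρ - 1 - 1) * y := by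
    rw [← Real.rpow_add_one hyne]; ring_nf
  rw [e1]
  field_simp
  ring

-- L y * y ^ s → ∞ for s > 0
lemma Lpow_atTop (L : ℝ → ℝ) (s : ℝ) (hs : 0 < s)
    (hLpos : ∀ y > (0:ℝ), 0 < L y)
    (hlogL : Tendsto (fun y => Real.log (L y) / Real.log y) atTop (nhds 0)) :
    Tendsto (fun y => L y * y ^ s) atTop atTop := by
  have h1 : Tendsto (fun y => Real.log y * (Real.log (L y) / Real.log y + s))
      atTop atTop := by
    exact Tendsto.atTop_mul_pos (by linarith : (0:ℝ) < 0 + s) Real.tendsto_log_atTop (hlogL.add tendsto_const_nhds)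
  have h2 := Real.tendsto_exp_atTop.comp h1
  apply h2.congr'
  filter_upwards [eventually_gt_atTop (1:ℝ)] with y hy
  have hy0 : (0:ℝ) < y := by linarith
  have hly : Real.log y ≠ 0 := ne_of_gt (Real.log_pos hy)
  have : Real.log y * (Real.log (L y) / Real.log y + s)
      = Real.log (L y) + Real.log y * s := by field_simp
  simp only [Function.comp, this, Real.exp_add, Real.exp_log (hLpos y hy0)]
  rw [← Real.rpow_def_of_pos hy0]

/-- The critical moment `q_c(n) = h'(y†(n)) - h''(y†(n))/h'(y†(n))`
grows like `(ln n)^(1 - 1/ρ)` up to slowly varying corrections: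
`ln q_c(n) / ln ln n → 1 - 1/ρ` as `n → ∞`. -/
theorem stmt10 (ρ : ℝ) (hρ : 1 < ρ) (L : ℝ → ℝ)
    (hLpos : ∀ y > (0:ℝ), 0 < L y)
    (hLdiff : ∀ y > (0:ℝ), DifferentiableAt ℝ L y)
    (hLdiff2 : ∀ y > (0:ℝ), DifferentiableAt ℝ (deriv L) y)
    (hSV : ∀ t > (0:ℝ), Tendsto (fun y => L (t * y) / L y) atTop (nhds 1))
    (hL1 : Tendsto (fun y => y * deriv L y / L y) atTop (nhds 0))
    (hL2 : Tendsto (deriv fun y => y * deriv L y / L y) atTop (nhds 0))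
    (h : ℝ → ℝ) (hh : ∀ y > (0:ℝ), h y = L y * y ^ ρ)
    (hmono : StrictMonoOn h (Set.Ioi 0)) (htop : Tendsto h atTop atTop)
    (hh' : ∀ y > (0:ℝ), 0 < deriv h y)
    (ydag : ℕ → ℝ) (hydag_pos : ∀ n ≥ 2, 0 < ydag n)
    (hydag : ∀ n ≥ 2, h (ydag n) = Real.log n)
    (qc : ℕ → ℝ)
    (hqc : ∀ n ≥ 2, qc n =
      deriv h (ydag n) - deriv (deriv h) (ydag n) / deriv h (ydag n)) :
    Tendsto (fun n => Real.log (qc n) / Real.log (Real.log n)) atTop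
      (nhds (1 - 1/ρ)) := by
  have hρ0 : (0:ℝ) < ρ := by linarith
  set E : ℝ → ℝ := fun x => x * deriv L x / L x with hEdef
  -- ydag tends to infinity
  have hytop : Tendsto ydag atTop atTop := by
    rw [tendsto_atTop]
    intro M
    have hln : Tendsto (fun n : ℕ => Real.log n) atTop atTop :=
      Real.tendsto_log_atTop.comp tendsto_natCast_atTop_atTop
    filter_upwards [hln.eventually_gt_atTop (h (max M 1)), eventually_ge_atTop 2]
      with n h1 h2
    by_contra hcon
    push_neg at hcon
    have hmem1 : ydag n ∈ Set.Ioi (0:ℝ) := hydag_pos n h2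
    have hmem2 : max M 1 ∈ Set.Ioi (0:ℝ) := Set.mem_Ioi.mpr (lt_of_lt_of_le one_pos (le_max_right _ _))
    have hle : ydag n ≤ max M 1 := le_trans (le_of_lt hcon) (le_max_left _ _)
    have := hmono.monotoneOn hmem1 hmem2 hle
    rw [hydag n h2] at this
    linarith
  have hlogL := logL_div L hLpos hLdiff hLdiff2 hL1
  -- e and e'
  have he : Tendsto (fun n => E (ydag n)) atTop (nhds 0) := hL1.comp hytop
  have he' : Tendsto (fun n => deriv E (ydag n)) atTop (nhds 0) := hL2.comp hytop
  set B : ℕ → ℝ := fun n => deriv E (ydag n) / (ρ + E (ydag n))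
      + (ρ + E (ydag n) - 1) / ydag n with hBdef
  set A : ℕ → ℝ := fun n => (ρ + E (ydag n)) * (L (ydag n) * ydag n ^ (ρ - 1))
      with hAdef
  have hre : Tendsto (fun n => ρ + E (ydag n)) atTop (nhds ρ) := by
    have := he.const_add ρ
    simpa using this
  -- B → 0
  have hB : Tendsto B atTop (nhds 0) := by
    have h1 : Tendsto (fun n => deriv E (ydag n) / (ρ + E (ydag n))) atTop
        (nhds (0 / ρ)) := he'.div hre (ne_of_gt hρ0)
    have h2 : Tendsto (fun n => (ρ + E (ydag n) - 1) / ydag n) atTop (nhds 0) :=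
      Tendsto.div_atTop (hre.sub tendsto_const_nhds) hytop
    have := h1.add h2
    simpa using this
  -- A → ∞
  have hA : Tendsto A atTop atTop := by
    apply Tendsto.pos_mul_atTop hρ0 hre
    exact (Lpow_atTop L (ρ-1) (by linarith) hLpos hlogL).comp hytop
  -- B/A → 0
  have hBA : Tendsto (fun n => B n / A n) atTop (nhds 0) := by
    have := hB.mul hA.inv_tendsto_atTop
    simp only [div_eq_mul_inv]
    simpa using this
  -- collected eventual facts
  have hln : Tendsto (fun n : ℕ => Real.log n) atTop atTop :=
    Real.tendsto_log_atTop.comp tendsto_natCast_atTop_atTop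
  have hev : ∀ᶠ n in atTop,
      Real.log (qc n) / Real.log (Real.log n) =
        (Real.log (ρ + E (ydag n)) / Real.log (ydag n)
          + Real.log (L (ydag n)) / Real.log (ydag n) + (ρ - 1)
          + Real.log (1 - B n / A n) / Real.log (ydag n))
        / (Real.log (L (ydag n)) / Real.log (ydag n) + ρ) := by
    filter_upwards [eventually_ge_atTop 2, hytop.eventually_gt_atTop 1,
      he.eventually (eventually_gt_nhds (show (-1:ℝ) < 0 by norm_num)),
      hBA.eventually (eventually_lt_nhds one_half_pos)]
      with n h2 hy1 hEgt hBAlt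
    set y := ydag n with hydef
    have hy0 : (0:ℝ) < y := by linarith
    have hL0 : (0:ℝ) < L y := hLpos y hy0
    have hrE : (0:ℝ) < ρ + E y := by linarith
    have hApos : (0:ℝ) < A n := by
      have : (0:ℝ) < y ^ (ρ - 1) := Real.rpow_pos_of_pos hy0 _
      simp only [hAdef]
      positivity
    have hF1 : deriv h y = A n := deriv_h_eq2 ρ L h hLpos hLdiff hh y hy0
    have hF2 : deriv (deriv h) y = A n * B n :=
      deriv2_div ρ L h hLpos hLdiff hLdiff2 hh y hy0 (ne_of_gt hrE)
    have hqcn : qc n = A n * (1 - B n / A n) := by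
      rw [hqc n h2, hF1, hF2]
      field_simp
    have h1B : (0:ℝ) < 1 - B n / A n := by linarith
    have hlogqc : Real.log (qc n) = Real.log (ρ + E y)
        + (Real.log (L y) + (ρ - 1) * Real.log y) + Real.log (1 - B n / A n) := by
      rw [hqcn, Real.log_mul (ne_of_gt hApos) (ne_of_gt h1B)]
      have : Real.log (A n) = Real.log (ρ + E y)
          + (Real.log (L y) + (ρ - 1) * Real.log y) := by
        simp only [hAdef]
        rw [Real.log_mul (ne_of_gt hrE)
          (by positivity : L y * y ^ (ρ-1) ≠ 0),
          Real.log_mul (ne_of_gt hL0)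
          (ne_of_gt (Real.rpow_pos_of_pos hy0 _)), Real.log_rpow hy0]
        try ring
      rw [this]
    have hloglog : Real.log (Real.log n) = Real.log (L y) + ρ * Real.log y := by
      rw [← hydag n h2, hh y hy0, Real.log_mul (ne_of_gt hL0)
        (ne_of_gt (Real.rpow_pos_of_pos hy0 _)), Real.log_rpow hy0]
      try ring
    rw [hlogqc, hloglog]
    have hc : Real.log y ≠ 0 := ne_of_gt (Real.log_pos hy1)
    rw [show Real.log (ρ + E y) / Real.log y + Real.log (L y) / Real.log y + (ρ - 1)
        + Real.log (1 - B n / A n) / Real.log y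
        = (Real.log (ρ + E y) + (Real.log (L y) + (ρ - 1) * Real.log y)
            + Real.log (1 - B n / A n)) / Real.log y from by field_simp; try ring,
      show Real.log (L y) / Real.log y + ρ
        = (Real.log (L y) + ρ * Real.log y) / Real.log y from by field_simp; try ring,
      div_div_div_cancel_right₀ hc]
  -- the limit of the rewritten expression
  have hlogy : Tendsto (fun n => Real.log (ydag n)) atTop atTop :=
    Real.tendsto_log_atTop.comp hytop
  have t1 : Tendsto (fun n => Real.log (ρ + E (ydag n)) / Real.log (ydag n))
      atTop (nhds 0) :=
    Tendsto.div_atTop (((Real.continuousAt_log (ne_of_gt hρ0)).tendsto).comp hre) hlogy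
  have t2 : Tendsto (fun n => Real.log (L (ydag n)) / Real.log (ydag n))
      atTop (nhds 0) := hlogL.comp hytop
  have t3 : Tendsto (fun n => Real.log (1 - B n / A n) / Real.log (ydag n))
      atTop (nhds 0) := by
    have h1 : Tendsto (fun n => 1 - B n / A n) atTop (nhds 1) := by
      have := (tendsto_const_nhds (x := (1:ℝ)) (f := atTop (α := ℕ))).sub hBA
      simpa using this
    have h2' : Tendsto (fun n => Real.log (1 - B n / A n)) atTop (nhds 0) := by
      have := ((Real.continuousAt_log one_ne_zero).tendsto).comp h1
      simpa [Function.comp_def] using this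
    exact Tendsto.div_atTop h2' hlogy
  have hfinal : Tendsto (fun n =>
      (Real.log (ρ + E (ydag n)) / Real.log (ydag n)
        + Real.log (L (ydag n)) / Real.log (ydag n) + (ρ - 1)
        + Real.log (1 - B n / A n) / Real.log (ydag n))
      / (Real.log (L (ydag n)) / Real.log (ydag n) + ρ)) atTop
      (nhds ((0 + 0 + (ρ - 1) + 0) / (0 + ρ))) := by
    exact Tendsto.div (((t1.add t2).add tendsto_const_nhds).add t3)
      (t2.add tendsto_const_nhds) (by simpa using ne_of_gt hρ0)
  have hval : (0 + 0 + (ρ - 1) + 0) / (0 + ρ) = 1 - 1 / ρ := by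
    field_simp
    ring
  rw [hval] at hfinal
  exact hfinal.congr' (hev.mono fun n hn => hn.symm)
end

section
/- Under the log-exponential-power-law class conditions (h(y) = L(y)·y^ρ, ρ > 1, L twice differentiable, slowly varying, y·L'(y)/L(y) → 0, (y·L'(y)/L(y))' → 0, h strictly increasing to ∞ with h' > 0), let ψ(y) = h(y) − ln h'(y) and for each large q let y*(q) solve ψ'(y*) = q, i.e. q = h'(y*) − h''(y*)/h'(y*). Then h'(y*(q))/q → 1 as q → ∞. -/
open Filter Real

/-- With `ψ(y) = h(y) - ln h'(y)` and `y*(q)` the solution of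
`ψ'(y*) = q` (i.e. `q = h'(y*) - h''(y*)/h'(y*)`), one has
`h'(y*(q)) / q → 1` as `q → ∞`. -/
theorem stmt11 (ρ : ℝ) (hρ : 1 < ρ) (L : ℝ → ℝ)
    (hLpos : ∀ y > (0:ℝ), 0 < L y)
    (hLdiff : ∀ y > (0:ℝ), DifferentiableAt ℝ L y)
    (hLdiff2 : ∀ y > (0:ℝ), DifferentiableAt ℝ (deriv L) y)
    (hSV : ∀ t > (0:ℝ), Tendsto (fun y => L (t * y) / L y) atTop (nhds 1))
    (hL1 : Tendsto (fun y => y * deriv L y / L y) atTop (nhds 0))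
    (hL2 : Tendsto (deriv fun y => y * deriv L y / L y) atTop (nhds 0))
    (h : ℝ → ℝ) (hh : ∀ y > (0:ℝ), h y = L y * y ^ ρ)
    (hmono : StrictMonoOn h (Set.Ioi 0)) (htop : Tendsto h atTop atTop)
    (hh' : ∀ y > (0:ℝ), 0 < deriv h y)
    (ψ : ℝ → ℝ) (hψ : ∀ y > (0:ℝ), ψ y = h y - Real.log (deriv h y))
    (ystar : ℝ → ℝ) (hystar_pos : ∀ᶠ q in atTop, 0 < ystar q)
    (hystar : ∀ᶠ q in atTop,
      q = deriv h (ystar q) - deriv (deriv h) (ystar q) / deriv h (ystar q))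
    (hystar_uniq : ∀ᶠ q in atTop, ∀ y > (0:ℝ),
      q = deriv h y - deriv (deriv h) y / deriv h y → y = ystar q)
    (hystar_top : Tendsto ystar atTop atTop) :
    Tendsto (fun q => deriv h (ystar q) / q) atTop (nhds 1) := by
  set E : ℝ → ℝ := fun y => y * deriv L y / L y with hE
  -- positivity of h
  have hhpos : ∀ y > (0:ℝ), 0 < h y := by
    intro y hy
    rw [hh y hy]
    exact mul_pos (hLpos y hy) (Real.rpow_pos_of_pos hy ρ)
  -- first derivative formula
  have hd1 : ∀ y > (0:ℝ), HasDerivAt h (L y * y ^ (ρ - 1) * (ρ + E y)) y := by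
    intro y hy
    have hev : h =ᶠ[nhds y] fun z => L z * z ^ ρ := by
      filter_upwards [isOpen_Ioi.mem_nhds hy] with z hz
      exact hh z hz
    have hr : HasDerivAt (fun z : ℝ => z ^ ρ) (ρ * y ^ (ρ - 1)) y :=
      Real.hasDerivAt_rpow_const (Or.inl (ne_of_gt hy))
    have hd : HasDerivAt (fun z => L z * z ^ ρ)
        (deriv L y * y ^ ρ + L y * (ρ * y ^ (ρ - 1))) y :=
      ((hLdiff y hy).hasDerivAt).mul hr
    have hd' := hd.congr_of_eventuallyEq hev
    refine hd'.congr_deriv ?_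
    have hyρ : y ^ ρ = y ^ (ρ - 1) * y := by
      rw [← Real.rpow_add_one (ne_of_gt hy) (ρ - 1)]
      norm_num
    rw [hyρ, hE]
    field_simp [(hLpos y hy).ne', (ne_of_gt hy)]
    ring
  -- positivity of ρ + E y
  have hpe : ∀ y > (0:ℝ), 0 < ρ + E y := by
    intro y hy
    have h1 : 0 < L y * y ^ (ρ - 1) := mul_pos (hLpos y hy) (Real.rpow_pos_of_pos hy _)
    have h2 := hh' y hy
    rw [(hd1 y hy).deriv] at h2
    by_contra hcon
    push_neg at hcon
    nlinarith
  -- E differentiable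
  have hEdiff : ∀ y > (0:ℝ), DifferentiableAt ℝ E y := by
    intro y hy
    exact (differentiableAt_id.mul (hLdiff2 y hy)).div (hLdiff y hy) (hLpos y hy).ne'
  -- second derivative formula
  have hd2 : ∀ y > (0:ℝ), HasDerivAt (deriv h)
      ((deriv L y * y ^ (ρ - 1) + L y * ((ρ - 1) * y ^ (ρ - 1 - 1))) * (ρ + E y)
        + L y * y ^ (ρ - 1) * deriv E y) y := by
    intro y hy
    have hev : deriv h =ᶠ[nhds y] fun z => L z * z ^ (ρ - 1) * (ρ + E z) := by
      filter_upwards [isOpen_Ioi.mem_nhds hy] with z hz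
      exact (hd1 z hz).deriv
    have h1 : HasDerivAt (fun z => L z * z ^ (ρ - 1))
        (deriv L y * y ^ (ρ - 1) + L y * ((ρ - 1) * y ^ (ρ - 1 - 1))) y :=
      ((hLdiff y hy).hasDerivAt).mul (Real.hasDerivAt_rpow_const (Or.inl (ne_of_gt hy)))
    have h2 : HasDerivAt (fun z => ρ + E z) (deriv E y) y :=
      ((hEdiff y hy).hasDerivAt).const_add ρ
    have h3 := h1.mul h2
    exact h3.congr_of_eventuallyEq hev
  -- the key ratio identity
  have hratio : ∀ y > (0:ℝ), deriv (deriv h) y / (deriv h y) ^ 2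
      = (E y + ρ - 1) / ((ρ + E y) * h y) + (y / h y) * (deriv E y / (ρ + E y) ^ 2) := by
    intro y hy
    have hLy := hLpos y hy
    have hu : (0:ℝ) < y ^ (ρ - 1) := Real.rpow_pos_of_pos hy _
    have hpey := hpe y hy
    have hyρ : y ^ ρ = y ^ (ρ - 1) * y := by
      rw [← Real.rpow_add_one (ne_of_gt hy) (ρ - 1)]
      norm_num
    have hym : y ^ (ρ - 1 - 1) = y ^ (ρ - 1) / y := by
      rw [Real.rpow_sub hy, Real.rpow_one]
    have hL' : deriv L y = L y * E y / y := by
      rw [hE]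
      field_simp
    rw [(hd2 y hy).deriv, (hd1 y hy).deriv, hh y hy, hyρ, hym, hL']
    field_simp
    ring
  -- h'/h = (ρ + E y)/y
  have hlogd : ∀ y > (0:ℝ), deriv h y / h y = (ρ + E y) / y := by
    intro y hy
    have hyρ : y ^ ρ = y ^ (ρ - 1) * y := by
      rw [← Real.rpow_add_one (ne_of_gt hy) (ρ - 1)]
      norm_num
    have hu : (0:ℝ) < y ^ (ρ - 1) := Real.rpow_pos_of_pos hy _
    rw [(hd1 y hy).deriv, hh y hy, hyρ]
    field_simp [(hLpos y hy).ne', (ne_of_gt hy), (ne_of_gt hu)]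
  -- eventually |E y| small
  have hEb : ∀ᶠ y in atTop, |E y| ≤ (ρ - 1) / 2 := by
    have := hL1.eventually (Metric.closedBall_mem_nhds (0:ℝ) (by linarith : (0:ℝ) < (ρ-1)/2))
    filter_upwards [this] with y hy
    simpa [Real.dist_eq] using hy
  obtain ⟨Y₀, hY₀⟩ := (hEb.and (eventually_gt_atTop 0)).exists_forall_of_atTop
  set Y : ℝ := max Y₀ 1 with hYdef
  have hYpos : (0:ℝ) < Y := lt_of_lt_of_le one_pos (le_max_right _ _)
  have hYprop : ∀ y ≥ Y, |E y| ≤ (ρ - 1) / 2 ∧ 0 < y := by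
    intro y hy
    exact hY₀ y (le_trans (le_max_left _ _) hy)
  -- the auxiliary function g
  set α : ℝ := (ρ + 1) / 2 with hα
  have hα1 : 1 < α := by rw [hα]; linarith
  set g : ℝ → ℝ := fun y => Real.log (h y) - α * Real.log y with hg
  have hgderiv : ∀ y ∈ Set.Ioi Y, HasDerivAt g ((ρ + E y - α) / y) y := by
    intro y hy
    have hy0 : (0:ℝ) < y := lt_trans hYpos hy
    have h1 : HasDerivAt (fun z => Real.log (h z))
        (L y * y ^ (ρ - 1) * (ρ + E y) / h y) y :=
      (hd1 y hy0).log (hhpos y hy0).ne'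
    have h2 : HasDerivAt (fun z => α * Real.log z) (α * y⁻¹) y :=
      (Real.hasDerivAt_log (ne_of_gt hy0)).const_mul α
    have h3 := h1.sub h2
    refine h3.congr_deriv ?_
    have : L y * y ^ (ρ - 1) * (ρ + E y) / h y = (ρ + E y) / y := by
      rw [← (hd1 y hy0).deriv]
      exact hlogd y hy0
    rw [this]
    field_simp
  have hgmono : MonotoneOn g (Set.Ici Y) := by
    apply monotoneOn_of_deriv_nonneg (convex_Ici Y)
    · intro y hy
      have hy0 : (0:ℝ) < y := lt_of_lt_of_le hYpos hy
      exact (((hd1 y hy0).log (hhpos y hy0).ne').continuousAt.sub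
        (continuousAt_const.mul (Real.continuousAt_log (ne_of_gt hy0)))).continuousWithinAt
    · intro y hy
      rw [interior_Ici] at hy
      exact (hgderiv y hy).differentiableAt.differentiableWithinAt
    · intro y hy
      rw [interior_Ici] at hy
      rw [(hgderiv y hy).deriv]
      have hy0 : (0:ℝ) < y := lt_trans hYpos hy
      have hb := (hYprop y (le_of_lt hy)).1
      have : -(ρ - 1) / 2 ≤ E y := by
        have := abs_le.mp hb
        linarith [this.1]
      apply div_nonneg _ (le_of_lt hy0)
      rw [hα]
      linarith
  -- log(h y) - log y → ∞
  have hloggrow : Tendsto (fun y => Real.log (h y) - Real.log y) atTop atTop := by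
    apply tendsto_atTop_mono' atTop
      (show ∀ᶠ y in atTop, g Y + (α - 1) * Real.log y ≤ Real.log (h y) - Real.log y from ?_)
    · apply tendsto_atTop_add_const_left
      exact (tendsto_const_mul_atTop_of_pos (by linarith : (0:ℝ) < α - 1)).mpr
        Real.tendsto_log_atTop
    · filter_upwards [eventually_ge_atTop Y] with y hy
      have hgY := hgmono (Set.self_mem_Ici) (Set.mem_Ici.mpr hy) hy
      have : g Y ≤ Real.log (h y) - α * Real.log y := hgY
      nlinarith [this]
  -- h y / y → ∞ and y / h y → 0
  have hdivtop : Tendsto (fun y => h y / y) atTop atTop := by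
    have := Real.tendsto_exp_atTop.comp hloggrow
    apply this.congr'
    filter_upwards [eventually_gt_atTop 0] with y hy0
    simp only [Function.comp]
    rw [← Real.log_div (ne_of_gt (hhpos y hy0)) (ne_of_gt hy0),
      Real.exp_log (div_pos (hhpos y hy0) hy0)]
  have hyoverh : Tendsto (fun y => y / h y) atTop (nhds 0) := by
    have := (tendsto_inv_atTop_zero).comp hdivtop
    apply this.congr'
    filter_upwards [eventually_gt_atTop 0] with y hy0
    simp only [Function.comp]
    rw [inv_div]
  -- the ratio tends to 0
  have hG0 : Tendsto (fun y => deriv (deriv h) y / (deriv h y) ^ 2) atTop (nhds 0) := by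
    have hnum : Tendsto (fun y => E y + ρ - 1) atTop (nhds (ρ - 1)) := by
      have := hL1.add_const (ρ - 1)
      simpa [hE, add_sub_assoc] using this
    have hpden : Tendsto (fun y => ρ + E y) atTop (nhds ρ) := by
      have := hL1.const_add ρ
      simpa using this
    have hden : Tendsto (fun y => (ρ + E y) * h y) atTop atTop :=
      hpden.pos_mul_atTop (by linarith) htop
    have t1 : Tendsto (fun y => (E y + ρ - 1) / ((ρ + E y) * h y)) atTop (nhds 0) :=
      hnum.div_atTop hden
    have t2 : Tendsto (fun y => (y / h y) * (deriv E y / (ρ + E y) ^ 2)) atTop (nhds 0) := by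
      have hq : Tendsto (fun y => deriv E y / (ρ + E y) ^ 2) atTop (nhds (0 / ρ ^ 2)) :=
        hL2.div (hpden.pow 2) (by positivity)
      have := hyoverh.mul hq
      simpa using this
    have hsum := t1.add t2
    rw [add_zero] at hsum
    apply hsum.congr'
    filter_upwards [eventually_gt_atTop 0] with y hy0
    exact (hratio y hy0).symm
  -- compose with ystar
  have hGq : Tendsto (fun q => deriv (deriv h) (ystar q) / (deriv h (ystar q)) ^ 2)
      atTop (nhds 0) := hG0.comp hystar_top
  -- final rewriting
  have hlt1 : ∀ᶠ q in atTop,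
      deriv (deriv h) (ystar q) / (deriv h (ystar q)) ^ 2 < 1 :=
    hGq.eventually (Filter.Tendsto.eventually_lt_const one_pos tendsto_id)
  have hfin : ∀ᶠ q in atTop, deriv h (ystar q) / q
      = (1 - deriv (deriv h) (ystar q) / (deriv h (ystar q)) ^ 2)⁻¹ := by
    filter_upwards [hystar, hystar_pos, hlt1] with q h1 h2 h3
    have hp := hh' (ystar q) h2
    set a := deriv h (ystar q) with hadef
    set b := deriv (deriv h) (ystar q) with hbdef
    have hq : q = a * (1 - b / a ^ 2) := by
      rw [h1]
      field_simp
    rw [hq, div_mul_eq_div_div, div_self (ne_of_gt hp), one_div]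
  have hlim : Tendsto (fun q =>
      (1 - deriv (deriv h) (ystar q) / (deriv h (ystar q)) ^ 2)⁻¹) atTop (nhds 1) := by
    have := (tendsto_const_nhds.sub hGq).inv₀ (by norm_num : (1:ℝ) - 0 ≠ 0)
    simpa using this
  exact hlim.congr' (EventuallyEq.symm hfin)
end

section
/- Let k ≥ 2, let G_k have Lebesgue density g ↦ exp( −e^{−g} − k·g ) / (k−1)!, and let Δ_1, …, Δ_{k−1} be i.i.d. standard exponential random variables independent of G_k. For β = (β_1, …, β_{k−1}) ∈ ℝ^{k−1} set Ω(β) = G_k + Σ_{i=1}^{k−1} β_i·Δ_i. Then among all β with E[Ω(β)] = 0, the second moment E[Ω(β)²] is minimized by the constant choice β_1 = … = β_{k−1} = ( Σ_{j=1}^{k−1} 1/j − γ ) / (k−1), where γ is the Euler–Mascheroni constant. (This is Proposition 1: the minimum-variance unbiased linear combination of the limiting order statistics.) -/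
open Filter Real MeasureTheory ProbabilityTheory
open Filter Real MeasureTheory ProbabilityTheory Set
open scoped NNReal ENNReal

lemma aux_int (k : ℕ) (hk : 1 ≤ k) :
    Integrable (fun g : ℝ => exp (-exp (-g) - k * g)) := by
  have hcont : Continuous (fun g : ℝ => exp (-exp (-g) - k * g)) := by continuity
  rw [← integrableOn_univ, ← Set.Iic_union_Ioi (a := (0:ℝ))]
  refine IntegrableOn.union ?_ ?_
  · refine Integrable.mono' ((integrableOn_exp_Iic 0).const_mul (Nat.factorial (k+1) : ℝ)) ?_ ?_
    · exact hcont.aestronglyMeasurable.restrict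
    · filter_upwards [ae_restrict_mem measurableSet_Iic] with g (hg : g ≤ 0)
      rw [Real.norm_eq_abs, abs_of_nonneg (exp_pos _).le]
      set C : ℝ := (Nat.factorial (k+1) : ℝ) with hC
      set x := exp (-g) with hxdef
      have hx0 : (0:ℝ) < x := exp_pos _
      have hx1 : (1:ℝ) ≤ x := one_le_exp (by linarith)
      have h1 : x ^ (k+1) ≤ C * exp x := by
        have h2 : x ^ (k+1) / C ≤ exp x := by
          calc x ^ (k+1) / C
              ≤ ∑ i ∈ Finset.range (k+2), x ^ i / (Nat.factorial i : ℝ) := by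
                refine Finset.single_le_sum (f := fun i => x ^ i / (Nat.factorial i : ℝ)) ?_ ?_
                · intro i _; positivity
                · simp [Finset.mem_range]
            _ ≤ exp x := Real.sum_le_exp_of_nonneg hx0.le _
        rw [div_le_iff₀ (by positivity)] at h2
        linarith [h2]
      have key : exp (-x) * x^(k+1) ≤ C := by
        have h3 := mul_le_mul_of_nonneg_left h1 (exp_pos (-x)).le
        calc exp (-x) * x^(k+1) ≤ exp (-x) * (C * exp x) := h3
          _ = C * (exp (-x) * exp x) := by ring
          _ = C := by rw [← Real.exp_add, neg_add_cancel, Real.exp_zero, mul_one]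
      have hexpg : exp g = x⁻¹ := by rw [hxdef, ← exp_neg, neg_neg]
      have hlhs : exp (-x - k*g) = exp (-x) * x ^ k := by
        rw [Real.exp_sub, hxdef, ← Real.exp_nat_mul, div_eq_mul_inv, ← Real.exp_neg]
        ring_nf
      rw [hlhs, hexpg, mul_comm C, ← div_eq_inv_mul, le_div_iff₀ hx0]
      calc exp (-x) * x ^ k * x = exp (-x) * x^(k+1) := by rw [pow_succ]; ring
        _ ≤ C := key
  · refine Integrable.mono' (exp_neg_integrableOn_Ioi 0 (b := 1) one_pos) ?_ ?_
    · exact hcont.aestronglyMeasurable.restrict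
    · filter_upwards [ae_restrict_mem measurableSet_Ioi] with g (hg : 0 < g)
      rw [Real.norm_eq_abs, abs_of_nonneg (exp_pos _).le]
      apply exp_le_exp.mpr
      have h1 : (1:ℝ) ≤ k := by exact_mod_cast hk
      nlinarith [exp_pos (-g)]



lemma abs_pow_le_exp (g : ℝ) (j : ℕ) (hj : j ≤ 2) :
    |g| ^ j ≤ 4 * (exp g + exp (-g)) := by
  have hexp : exp |g| ≤ exp g + exp (-g) := by
    rcases abs_cases g with ⟨h, _⟩ | ⟨h, _⟩ <;> rw [h] <;>
      [linarith [exp_pos (-g)]; linarith [exp_pos g]]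
  have ht : (0:ℝ) ≤ |g| := abs_nonneg g
  have h1 : |g| + 1 ≤ exp |g| := Real.add_one_le_exp _
  have h2 : |g|/2 + 1 ≤ exp (|g|/2) := Real.add_one_le_exp _
  have h3 : exp (|g|/2) * exp (|g|/2) = exp |g| := by
    rw [← Real.exp_add]; ring_nf
  interval_cases j
  · simp only [pow_zero]; nlinarith
  · simp only [pow_one]; nlinarith
  · nlinarith

lemma aux_mom (m j : ℕ) (hm : 1 ≤ m) (hj : j ≤ 2) :
    Integrable (fun g : ℝ => g ^ j * exp (-exp (-g) - ((m:ℝ) + 1) * g)) := by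
  have hmaj : Integrable (fun g : ℝ =>
      4 * exp (-exp (-g) - m * g) + 4 * exp (-exp (-g) - (m+2 : ℕ) * g)) :=
    ((aux_int m hm).const_mul 4).add ((aux_int (m+2) (by omega)).const_mul 4)
  refine hmaj.mono' ?_ ?_
  · exact (Continuous.mul (by continuity) (by continuity)).aestronglyMeasurable
  · filter_upwards with g
    have hD : (0:ℝ) < exp (-exp (-g) - ((m:ℝ) + 1) * g) := exp_pos _
    rw [Real.norm_eq_abs, abs_mul, abs_pow, abs_of_nonneg hD.le]
    have hb := abs_pow_le_exp g j hj
    have e1 : exp g * exp (-exp (-g) - ((m:ℝ) + 1) * g) = exp (-exp (-g) - m * g) := by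
      rw [← Real.exp_add]; ring_nf
    have e2 : exp (-g) * exp (-exp (-g) - ((m:ℝ) + 1) * g)
        = exp (-exp (-g) - (m+2 : ℕ) * g) := by
      rw [← Real.exp_add]; push_cast; ring_nf
    calc |g| ^ j * exp (-exp (-g) - ((m:ℝ) + 1) * g)
        ≤ (4 * (exp g + exp (-g))) * exp (-exp (-g) - ((m:ℝ) + 1) * g) :=
          mul_le_mul_of_nonneg_right hb hD.le
      _ = 4 * (exp g * exp (-exp (-g) - ((m:ℝ) + 1) * g))
          + 4 * (exp (-g) * exp (-exp (-g) - ((m:ℝ) + 1) * g)) := by ring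
      _ = 4 * exp (-exp (-g) - m * g) + 4 * exp (-exp (-g) - (m+2 : ℕ) * g) := by
          rw [e1, e2]


lemma aux_subst (m : ℕ) (φ : ℝ → ℝ) :
    ∫ t in Ioi (0:ℝ), φ (-Real.log t) * (t ^ m * exp (-t))
      = ∫ g : ℝ, φ g * exp (-exp (-g) - ((m:ℝ) + 1) * g) := by
  have himg : (fun g : ℝ => exp (-g)) '' univ = Ioi 0 := by
    rw [image_univ]
    have : (fun g : ℝ => exp (-g)) = exp ∘ (fun g : ℝ => -g) := rfl
    rw [this, Set.range_comp]
    have : Set.range (fun g : ℝ => -g) = univ := by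
      ext x; simp; exact ⟨-x, by ring⟩
    rw [this, Set.image_univ, Real.range_exp]
  have hder : ∀ x ∈ (univ : Set ℝ),
      HasDerivWithinAt (fun g : ℝ => exp (-g)) (-exp (-x)) univ x := by
    intro x _
    have : HasDerivAt (fun g : ℝ => exp (-g)) (exp (-x) * (-1)) x :=
      (Real.hasDerivAt_exp (-x)).comp x (hasDerivAt_neg x)
    exact (by simpa using this : HasDerivAt (fun g : ℝ => exp (-g)) (-exp (-x)) x).hasDerivWithinAt
  have hinj : InjOn (fun g : ℝ => exp (-g)) univ := by
    intro a _ b _ h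
    simpa using Real.exp_injective h
  have := integral_image_eq_integral_abs_deriv_smul MeasurableSet.univ hder hinj
    (fun t => φ (-Real.log t) * (t ^ m * exp (-t)))
  rw [himg] at this
  rw [this, MeasureTheory.setIntegral_univ]
  congr 1
  ext g
  rw [smul_eq_mul, abs_neg, abs_of_nonneg (exp_pos _).le, Real.log_exp, neg_neg,
    ← Real.exp_nat_mul]
  rw [show ∀ a b c d : ℝ, a * (b * (c * d)) = b * (a * c * d) from fun a b c d => by ring]
  congr 1
  rw [← Real.exp_add, ← Real.exp_add]
  congr 1
  ring


lemma aux_gammaDeriv (m : ℕ) :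
    ∫ t in Ioi (0:ℝ), (t:ℝ) ^ m * (Real.log t * exp (-t))
      = (Nat.factorial m : ℝ) * (-Real.eulerMascheroniConstant + (harmonic m : ℝ)) := by
  have hre : (0:ℝ) < ((m:ℂ) + 1).re := by
    simp only [Complex.add_re, Complex.natCast_re, Complex.one_re]
    positivity
  have h1 := Complex.hasDerivAt_GammaIntegral (s := (m:ℂ) + 1) hre
  -- Gamma agrees with GammaIntegral near s
  have hopen : IsOpen {z : ℂ | 0 < z.re} := isOpen_lt continuous_const Complex.continuous_re
  have heq : Complex.Gamma =ᶠ[nhds ((m:ℂ)+1)] Complex.GammaIntegral := by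
    filter_upwards [hopen.mem_nhds hre] with z hz
    exact Complex.Gamma_eq_integral hz
  have h2 : HasDerivAt Complex.Gamma
      (∫ t : ℝ in Ioi 0, (t:ℂ) ^ ((m:ℂ) + 1 - 1) * (Real.log t * Real.exp (-t))) ((m:ℂ)+1) :=
    h1.congr_of_eventuallyEq heq
  set I : ℂ := ∫ t : ℝ in Ioi 0, (t:ℂ) ^ ((m:ℂ) + 1 - 1) * (Real.log t * Real.exp (-t)) with hI
  have hcast : ((((m:ℝ) + 1) : ℝ) : ℂ) = (m:ℂ) + 1 := by push_cast; ring
  have h4 : HasDerivAt (fun x : ℝ => (Complex.Gamma (x:ℂ)).re) I.re ((m:ℝ)+1) :=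
    HasDerivAt.real_of_complex (by rwa [hcast] : HasDerivAt Complex.Gamma I (((((m:ℝ)+1)):ℝ):ℂ))
  have h5 : (fun x : ℝ => (Complex.Gamma (x:ℂ)).re) = Real.Gamma := by
    funext x; rw [Complex.Gamma_ofReal, Complex.ofReal_re]
  rw [h5] at h4
  have h6 := Real.hasDerivAt_Gamma_nat m
  have h7 : I.re = (Nat.factorial m : ℝ) * (-Real.eulerMascheroniConstant + (harmonic m : ℝ)) :=
    h4.unique h6
  -- identify I.re with the real integral
  have h8 : I.re = ∫ t in Ioi (0:ℝ), (t:ℝ) ^ m * (Real.log t * exp (-t)) := by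
    rw [hI, show (∫ t : ℝ in Ioi 0, (t:ℂ) ^ ((m:ℂ)+1-1) * (Real.log t * Real.exp (-t)))
        = ∫ t : ℝ in Ioi 0, (((t:ℝ) ^ m * (Real.log t * Real.exp (-t)) : ℝ) : ℂ) from
      setIntegral_congr_fun measurableSet_Ioi (fun t _ => by
        rw [add_sub_cancel_right, Complex.cpow_natCast]; push_cast; ring)]
    rw [show (∫ t in Ioi (0:ℝ), (((t:ℝ) ^ m * (Real.log t * Real.exp (-t)) : ℝ) : ℂ))
        = ((∫ t in Ioi (0:ℝ), (t:ℝ) ^ m * (Real.log t * Real.exp (-t)) : ℝ) : ℂ) from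
      integral_ofReal, Complex.ofReal_re]
  rw [← h8, h7]


lemma aux_wd_integral {d : ℝ → ℝ} (hd : Measurable d) (hd0 : ∀ x, 0 ≤ d x) (φ : ℝ → ℝ) :
    ∫ x, φ x ∂((volume : Measure ℝ).withDensity (fun x => ENNReal.ofReal (d x)))
      = ∫ x, d x * φ x := by
  have h1 : (fun x => ENNReal.ofReal (d x)) = (fun x => ((d x).toNNReal : ℝ≥0∞)) := rfl
  rw [h1, integral_withDensity_eq_integral_smul hd.real_toNNReal]
  congr 1; funext x
  rw [NNReal.smul_def, Real.coe_toNNReal _ (hd0 x), smul_eq_mul]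

lemma aux_wd_integrable {d : ℝ → ℝ} (hd : Measurable d) (hd0 : ∀ x, 0 ≤ d x) (φ : ℝ → ℝ) :
    Integrable φ ((volume : Measure ℝ).withDensity (fun x => ENNReal.ofReal (d x)))
      ↔ Integrable (fun x => d x * φ x) := by
  have h1 : (fun x => ENNReal.ofReal (d x)) = (fun x => ((d x).toNNReal : ℝ≥0∞)) := rfl
  rw [h1, integrable_withDensity_iff_integrable_smul hd.real_toNNReal]
  constructor <;> intro h <;> refine h.congr (Filter.Eventually.of_forall fun x => ?_) <;>
    simp only [NNReal.smul_def, Real.coe_toNNReal _ (hd0 x), smul_eq_mul]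




lemma aux_exp (j : ℕ) :
    Integrable (fun x : ℝ => x ^ j) (expMeasure 1) ∧
    ∫ x, x ^ j ∂(expMeasure 1) = (Nat.factorial j : ℝ) := by
  have hmeas := measurable_gammaPDFReal 1 1
  have hnn := gammaPDFReal_nonneg (a := 1) (r := 1) one_pos one_pos
  have hexp : expMeasure 1
      = (volume : Measure ℝ).withDensity (fun x => ENNReal.ofReal (gammaPDFReal 1 1 x)) := rfl
  have hd_eq : (fun x => gammaPDFReal 1 1 x * x ^ j)
      = Set.indicator (Ici 0) (fun x : ℝ => exp (-x) * x ^ j) := by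
    funext x
    simp only [gammaPDFReal, Set.indicator, mem_Ici]
    split_ifs with h
    · rw [Real.Gamma_one, one_rpow, sub_self, rpow_zero, one_mul]
      ring_nf
    · ring
  have hIoi : IntegrableOn (fun x : ℝ => exp (-x) * x ^ j) (Ioi 0) := by
    have := Real.GammaIntegral_convergent (s := (j:ℝ) + 1) (by positivity)
    refine this.congr_fun (fun x hx => ?_) measurableSet_Ioi
    simp only [add_sub_cancel_right, rpow_natCast]
  have hint : Integrable (fun x => gammaPDFReal 1 1 x * x ^ j) := by
    rw [hd_eq, integrable_indicator_iff measurableSet_Ici]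
    rwa [IntegrableOn, Measure.restrict_congr_set Ioi_ae_eq_Ici] at hIoi
  constructor
  · rw [hexp, aux_wd_integrable hmeas hnn]
    exact hint
  · rw [hexp, aux_wd_integral hmeas hnn]
    rw [show (fun x => gammaPDFReal 1 1 x * x ^ j) = _ from hd_eq]
    rw [MeasureTheory.integral_indicator measurableSet_Ici, integral_Ici_eq_integral_Ioi]
    have := Real.Gamma_eq_integral (s := (j:ℝ) + 1) (by positivity)
    rw [show ((j:ℝ) + 1) = ((j:ℕ) : ℝ) + 1 by norm_num, Real.Gamma_nat_eq_factorial] at this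
    rw [this]
    exact setIntegral_congr_fun measurableSet_Ioi (fun x hx => by
        rw [add_sub_cancel_right, rpow_natCast])
lemma aux_G_val (m : ℕ) :
    ∫ g : ℝ, g * exp (-exp (-g) - ((m:ℝ) + 1) * g)
      = (Nat.factorial m : ℝ) * (Real.eulerMascheroniConstant - (harmonic m : ℝ)) := by
  rw [← aux_subst m (fun x => x)]
  have : (∫ t in Ioi (0:ℝ), (-Real.log t) * (t ^ m * exp (-t)))
      = -∫ t in Ioi (0:ℝ), t ^ m * (Real.log t * exp (-t)) := by
    rw [← integral_neg]; exact setIntegral_congr_fun measurableSet_Ioi (fun t _ => by ring)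
  rw [this, aux_gammaDeriv]; ring





/-- Proposition 1: With `k = m+1 ≥ 2`, let `G_k` have density
`g ↦ exp (-e^{-g} - k g)/(k-1)!`, let `Δ_1, …, Δ_{k-1}` be i.i.d. standard
exponential independent of `G_k`, and set `Ω(β) = G_k + ∑ β_i Δ_i`. Among all
`β` with `E[Ω(β)] = 0`, the second moment `E[Ω(β)²]` is minimized by the
constant choice `β_i = (∑_{j=1}^{k-1} 1/j - γ)/(k-1)`. -/
theorem stmt15 {Ωsp : Type*} [MeasureSpace Ωsp] (μ : Measure Ωsp)
    [IsProbabilityMeasure μ]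
    (m : ℕ) (hm : 1 ≤ m)
    (G : Ωsp → ℝ) (hGmeas : Measurable G)
    (hG : Measure.map G μ = (volume : Measure ℝ).withDensity (fun g =>
      ENNReal.ofReal (Real.exp (- Real.exp (-g) - ((m : ℝ) + 1) * g) /
        (Nat.factorial m : ℝ))))
    (Δ : Fin m → Ωsp → ℝ) (hΔmeas : ∀ i, Measurable (Δ i))
    (hΔlaw : ∀ i, Measure.map (Δ i) μ = expMeasure 1)
    (hindep : iIndepFun
      (Fin.snoc Δ G : Fin (m + 1) → Ωsp → ℝ) μ)
    (Om : (Fin m → ℝ) → Ωsp → ℝ)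
    (hOm : ∀ β ω, Om β ω = G ω + ∑ i, β i * Δ i ω)
    (βstar : Fin m → ℝ)
    (hβstar : ∀ i, βstar i =
      ((∑ j ∈ Finset.range m, 1 / (j + 1 : ℝ)) -
        Real.eulerMascheroniConstant) / m) :
    (∫ ω, Om βstar ω ∂μ) = 0 ∧
      ∀ β : Fin m → ℝ, (∫ ω, Om β ω ∂μ) = 0 →
        (∫ ω, (Om βstar ω) ^ 2 ∂μ) ≤ ∫ ω, (Om β ω) ^ 2 ∂μ := by
  
  set H : ℝ := (harmonic m : ℝ) with hH
  have hHsum : H = ∑ j ∈ Finset.range m, 1 / (j + 1 : ℝ) := by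
    rw [hH, harmonic]; push_cast; simp [one_div]
  set a : ℝ := Real.eulerMascheroniConstant - H with ha
  set D : ℝ → ℝ := fun g => Real.exp (- Real.exp (-g) - ((m : ℝ) + 1) * g) with hD
  set d : ℝ → ℝ := fun g => D g / (Nat.factorial m : ℝ) with hd
  have hfacpos : (0:ℝ) < (Nat.factorial m : ℝ) := by positivity
  have hdmeas : Measurable d := by
    apply Measurable.div_const
    exact (Real.continuous_exp.comp (by continuity)).measurable
  have hdnn : ∀ x, 0 ≤ d x := fun x => by positivity
  have hGlaw : Measure.map G μ
      = (volume : Measure ℝ).withDensity (fun g => ENNReal.ofReal (d g)) := hG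
  -- integrability of moments of G
  have hmom : ∀ j : ℕ, j ≤ 2 → Integrable (fun x : ℝ => d x * x ^ j) := by
    intro j hj
    have h1 := (aux_mom m j hm hj).const_mul ((Nat.factorial m : ℝ))⁻¹
    refine h1.congr (Filter.Eventually.of_forall fun x => ?_)
    rw [hd]; field_simp; simp only [hD]; ring_nf
  have hGint : Integrable G μ := by
    have h0 : Integrable (fun x : ℝ => x) (Measure.map G μ) := by
      rw [hGlaw, aux_wd_integrable hdmeas hdnn]
      exact (hmom 1 one_le_two).congr (Filter.Eventually.of_forall fun x => by simp)
    have := (integrable_map_measure aestronglyMeasurable_id hGmeas.aemeasurable).mp h0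
    exact this
  have hG2int : Integrable (fun ω => G ω ^ 2) μ := by
    have h0 : Integrable (fun x : ℝ => x ^ 2) (Measure.map G μ) := by
      rw [hGlaw, aux_wd_integrable hdmeas hdnn]
      exact hmom 2 le_rfl
    exact (integrable_map_measure (continuous_pow 2).aestronglyMeasurable hGmeas.aemeasurable).mp h0
  have hEG : ∫ ω, G ω ∂μ = a := by
    have h0 : ∫ ω, G ω ∂μ = ∫ x, x ∂(Measure.map G μ) :=
      (integral_map hGmeas.aemeasurable aestronglyMeasurable_id).symm
    rw [h0, hGlaw, aux_wd_integral hdmeas hdnn]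
    have h1 : (fun x => d x * x) = fun x => ((Nat.factorial m : ℝ))⁻¹ * (x * D x) := by
      funext x; rw [hd]; field_simp
    rw [h1, integral_const_mul, hD, aux_G_val]
    field_simp [ha]
    rw [ha, hH]
  -- Δ moments
  have hΔint : ∀ i, Integrable (Δ i) μ := by
    intro i
    have h0 : Integrable (fun x : ℝ => x) (Measure.map (Δ i) μ) := by
      rw [hΔlaw i]
      exact (aux_exp 1).1.congr (Filter.Eventually.of_forall fun x => by simp)
    exact (integrable_map_measure aestronglyMeasurable_id (hΔmeas i).aemeasurable).mp h0
  have hEΔ : ∀ i, ∫ ω, Δ i ω ∂μ = 1 := by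
    intro i
    have h0 : ∫ ω, Δ i ω ∂μ = ∫ x, x ∂(Measure.map (Δ i) μ) :=
      (integral_map (hΔmeas i).aemeasurable aestronglyMeasurable_id).symm
    rw [h0, hΔlaw i]
    have := (aux_exp 1).2
    simpa using this
  have hΔ2int : ∀ i, Integrable (fun ω => Δ i ω ^ 2) μ := by
    intro i
    have h0 : Integrable (fun x : ℝ => x ^ 2) (Measure.map (Δ i) μ) := by
      rw [hΔlaw i]; exact (aux_exp 2).1
    exact (integrable_map_measure (continuous_pow 2).aestronglyMeasurable (hΔmeas i).aemeasurable).mp h0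
  have hEΔ2 : ∀ i, ∫ ω, Δ i ω ^ 2 ∂μ = 2 := by
    intro i
    have h0 : ∫ ω, Δ i ω ^ 2 ∂μ = ∫ x, x ^ 2 ∂(Measure.map (Δ i) μ) :=
      (integral_map (hΔmeas i).aemeasurable (continuous_pow 2).aestronglyMeasurable).symm
    rw [h0, hΔlaw i]
    have := (aux_exp 2).2
    simpa [Nat.factorial] using this
  -- independence
  have hGΔ : ∀ i, IndepFun G (Δ i) μ := by
    intro i
    have h1 := hindep.indepFun (i := Fin.last m) (j := i.castSucc)
      (by exact (Fin.castSucc_lt_last i).ne')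
    simpa [Fin.snoc_last, Fin.snoc_castSucc] using h1
  have hΔΔ : ∀ i j, i ≠ j → IndepFun (Δ i) (Δ j) μ := by
    intro i j hij
    have h1 := hindep.indepFun (i := i.castSucc) (j := j.castSucc)
      (by simpa [Fin.castSucc_inj] using hij)
    simpa [Fin.snoc_castSucc] using h1
  -- product integrability and values
  have hGDint : ∀ i, Integrable (fun ω => G ω * Δ i ω) μ := fun i =>
    (hGΔ i).integrable_mul hGint (hΔint i)
  have hGDval : ∀ i, ∫ ω, G ω * Δ i ω ∂μ = a := by
    intro i
    rw [show (fun ω => G ω * Δ i ω) = G * Δ i from rfl,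
      (hGΔ i).integral_mul_eq_mul_integral hGint.1 (hΔint i).1, hEG, hEΔ i, mul_one]
  have hDDint : ∀ i j, Integrable (fun ω => Δ i ω * Δ j ω) μ := by
    intro i j
    by_cases h : i = j
    · subst h
      exact (hΔ2int i).congr (Filter.Eventually.of_forall fun ω => by ring)
    · exact (hΔΔ i j h).integrable_mul (hΔint i) (hΔint j)
  have hDDval : ∀ i j, ∫ ω, Δ i ω * Δ j ω ∂μ = if i = j then 2 else 1 := by
    intro i j
    by_cases h : i = j
    · subst h
      rw [if_pos rfl, ← hEΔ2 i]
      exact integral_congr_ae (Filter.Eventually.of_forall fun ω => by ring)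
    · rw [if_neg h,
        show (fun ω => Δ i ω * Δ j ω) = Δ i * Δ j from rfl,
        (hΔΔ i j h).integral_mul_eq_mul_integral (hΔint i).1 (hΔint j).1, hEΔ i, hEΔ j, mul_one]
  -- first moments
  have hE1 : ∀ β : Fin m → ℝ, ∫ ω, Om β ω ∂μ = a + ∑ i, β i := by
    intro β
    simp_rw [hOm]
    rw [integral_add hGint (integrable_finset_sum _ (fun i _ => (hΔint i).const_mul (β i))),
      integral_finset_sum _ (fun i _ => (hΔint i).const_mul (β i)), hEG]
    congr 1
    refine Finset.sum_congr rfl (fun i _ => ?_)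
    rw [integral_const_mul, hEΔ i, mul_one]
  -- second moments
  set b : ℝ := ∫ ω, G ω ^ 2 ∂μ with hb
  have hE2 : ∀ β : Fin m → ℝ, ∫ ω, (Om β ω) ^ 2 ∂μ
      = b + 2 * a * (∑ i, β i) + ((∑ i, β i) ^ 2 + ∑ i, (β i) ^ 2) := by
    intro β
    have hexp : ∀ ω, (Om β ω) ^ 2
        = G ω ^ 2 + (∑ i, (2 * β i) * (G ω * Δ i ω))
          + ∑ i, ∑ j, (β i * β j) * (Δ i ω * Δ j ω) := by
      intro ω
      rw [hOm, add_sq, sq (∑ i, β i * Δ i ω), Finset.sum_mul_sum]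
      congr 1
      · congr 1
        rw [Finset.mul_sum]
        exact Finset.sum_congr rfl (fun i _ => by ring)
      · exact Finset.sum_congr rfl (fun i _ => Finset.sum_congr rfl (fun j _ => by ring))
    simp_rw [hexp]
    have hint1 : Integrable (fun ω => ∑ i, (2 * β i) * (G ω * Δ i ω)) μ :=
      integrable_finset_sum _ (fun i _ => (hGDint i).const_mul _)
    have hint2 : Integrable (fun ω => ∑ i, ∑ j, (β i * β j) * (Δ i ω * Δ j ω)) μ :=
      integrable_finset_sum _ (fun i _ =>
        integrable_finset_sum _ (fun j _ => (hDDint i j).const_mul _))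
    have hint0 : Integrable (fun ω => G ω ^ 2 + ∑ i, (2 * β i) * (G ω * Δ i ω)) μ :=
      hG2int.add hint1
    rw [integral_add hint0 hint2, integral_add hG2int hint1,
      integral_finset_sum _ (fun i _ => (hGDint i).const_mul _),
      integral_finset_sum _ (fun i _ =>
        integrable_finset_sum _ (fun j _ => (hDDint i j).const_mul _))]
    have hs1 : ∑ i, ∫ ω, (2 * β i) * (G ω * Δ i ω) ∂μ = 2 * a * (∑ i, β i) := by
      rw [Finset.mul_sum]
      refine Finset.sum_congr rfl (fun i _ => ?_)
      rw [integral_const_mul, hGDval i]; ring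
    have hs2 : ∑ i, ∫ ω, ∑ j, (β i * β j) * (Δ i ω * Δ j ω) ∂μ
        = (∑ i, β i) ^ 2 + ∑ i, (β i) ^ 2 := by
      have hrow : ∀ i : Fin m, ∫ ω, ∑ j, (β i * β j) * (Δ i ω * Δ j ω) ∂μ
          = β i * (∑ j, β j) + β i ^ 2 := by
        intro i
        rw [integral_finset_sum _ (fun j _ => (hDDint i j).const_mul _)]
        have : ∀ j : Fin m, ∫ ω, (β i * β j) * (Δ i ω * Δ j ω) ∂μ
            = β i * β j + (if i = j then β i * β j else 0) := by
          intro j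
          rw [integral_const_mul, hDDval i j]
          split_ifs <;> ring
        simp_rw [this]
        rw [Finset.sum_add_distrib, Finset.sum_ite_eq]
        simp only [Finset.mem_univ, if_true, Finset.mul_sum, sq]
      simp_rw [hrow]
      rw [Finset.sum_add_distrib, ← Finset.sum_mul, sq (∑ i, β i)]
    rw [hs1, hs2, hb]
  -- sum of βstar
  have hmR : (0:ℝ) < (m:ℝ) := by exact_mod_cast hm
  have hSstar : ∑ i, βstar i = -a := by
    have : ∀ i, βstar i = -a / m := by
      intro i; rw [hβstar i, ha, hHsum]; ring
    simp_rw [this]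
    rw [Finset.sum_const, Finset.card_univ, Fintype.card_fin, nsmul_eq_mul]
    field_simp
  constructor
  · rw [hE1, hSstar]; ring
  · intro β hβ
    have hSβ : ∑ i, β i = -a := by
      have := hE1 β
      rw [hβ] at this
      linarith
    rw [hE2, hE2, hSstar, hSβ]
    have hcauchy : (∑ i, β i) ^ 2 ≤ (m:ℝ) * ∑ i, (β i) ^ 2 := by
      have := sq_sum_le_card_mul_sum_sq (s := (Finset.univ : Finset (Fin m))) (f := β)
      simpa [Finset.card_univ, Fintype.card_fin] using this
    have hQstar : ∑ i, (βstar i) ^ 2 = a ^ 2 / m := by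
      have : ∀ i, βstar i = -a / m := by
        intro i; rw [hβstar i, ha, hHsum]; ring
      simp_rw [this]
      rw [Finset.sum_const, Finset.card_univ, Fintype.card_fin, nsmul_eq_mul]
      field_simp
    rw [hQstar]
    have : a ^ 2 / m ≤ ∑ i, (β i) ^ 2 := by
      rw [div_le_iff₀ hmR]
      calc a ^ 2 = (∑ i, β i) ^ 2 := by rw [hSβ]; ring
        _ ≤ (m:ℝ) * ∑ i, (β i) ^ 2 := hcauchy
        _ = (∑ i, (β i) ^ 2) * m := by ring
    linarith
end
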